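/- arXiv:1111.0775 — 7 statements merged into one kernel-verified Lean document; each statement's English description precedes it below -/
import Mathlib

section
/- A finitely generated group G is free abelian (isomorphic to ℤⁿ for some n ≥ 0) if and only if there exists a finite symmetric generating set X of G such that Geo(G,X) is 1-locally testable. -/
/-- `pre_{k-1}`, `suf_{k-1}` and `sub_k` agree: the equivalence `∼_k` on words. -/
def SimK {A : Type*} (k : ℕ) (u v : List A) : Prop :=
  u.take (k - 1) = v.take (k - 1) ∧
  u.drop (u.length - (k - 1)) = v.drop (v.length - (k - 1)) ∧
  ∀ s : List A, s.length = k → (s <:+: u ↔ s <:+: v)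

/-- A language `L` is `k`-locally testable if membership is invariant under `∼_k`. -/
def LocallyTestable {A : Type*} (k : ℕ) (L : Set (List A)) : Prop :=
  ∀ u v : List A, SimK k u v → (u ∈ L ↔ v ∈ L)

/-- The syntactic congruence of a language: `u ∼_L v` iff `sut ∈ L ↔ svt ∈ L` for all `s, t`. -/
def SynCong {A : Type*} (L : Set (List A)) (u v : List A) : Prop :=
  ∀ s t : List A, s ++ u ++ t ∈ L ↔ s ++ v ++ t ∈ L

/-- The element of `G` represented by a word over the generating set `X`. -/
def wordProd {G : Type*} [Group G] {X : Set G} (w : List X) : G :=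
  (w.map Subtype.val).prod

/-- A word over `X` is geodesic if no word representing the same element is shorter. -/
def IsGeodesic {G : Type*} [Group G] (X : Set G) (w : List X) : Prop :=
  ∀ v : List X, wordProd v = wordProd w → w.length ≤ v.length

/-- The language of all geodesic words over `X`. -/
def Geo {G : Type*} [Group G] (X : Set G) : Set (List X) :=
  {w | IsGeodesic X w}

/-- The `j`-th power of a word in the free monoid (concatenation of `j` copies). -/
def listPow {A : Type*} (w : List A) : ℕ → List A
  | 0 => []
  | n + 1 => w ++ listPow w n

namespace LTGeo

lemma singleton_infix_iff {A : Type*} {x : A} {u : List A} : [x] <:+: u ↔ x ∈ u := by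
  constructor
  · intro h; exact h.sublist.mem (List.mem_singleton_self x)
  · intro h
    obtain ⟨s, t, rfl⟩ := List.append_of_mem h
    exact ⟨s, t, by simp⟩

lemma simK_one_of_letters {A : Type*} {u v : List A} (h : ∀ x, x ∈ u ↔ x ∈ v) :
    SimK 1 u v := by
  refine ⟨by simp, by simp, ?_⟩
  intro s hs
  match s, hs with
  | [x], _ => simp only [singleton_infix_iff]; exact h x

variable {G : Type*} [Group G] {X : Set G}

lemma wordProd_nil : wordProd ([] : List X) = 1 := rfl

lemma wordProd_cons (x : X) (w : List X) : wordProd (x :: w) = (x : G) * wordProd w := by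
  simp [wordProd]

lemma wordProd_append (u v : List X) : wordProd (u ++ v) = wordProd u * wordProd v := by
  simp [wordProd]

lemma wordProd_listPow (w : List X) (n : ℕ) :
    wordProd (listPow w n) = (wordProd w) ^ n := by
  induction n with
  | zero => simp [listPow, wordProd_nil]
  | succ n ih => rw [listPow, wordProd_append, ih, pow_succ']

lemma length_listPow {A : Type*} (w : List A) (n : ℕ) :
    (listPow w n).length = n * w.length := by
  induction n with
  | zero => simp [listPow]
  | succ n ih => simp [listPow, ih]; ring

lemma mem_listPow {A : Type*} {w : List A} {n : ℕ} (hn : 0 < n) (x : A) :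
    x ∈ listPow w n ↔ x ∈ w := by
  induction n with
  | zero => omega
  | succ n ih =>
    rcases Nat.eq_zero_or_pos n with h | h
    · subst h; simp [listPow]
    · simp only [listPow, List.mem_append, ih h]; tauto

/-- inverse letter -/
def invLetter (hsym : ∀ x ∈ X, x⁻¹ ∈ X) (a : X) : X := ⟨(a : G)⁻¹, hsym _ a.2⟩

lemma wordProd_invWord (hsym : ∀ x ∈ X, x⁻¹ ∈ X) (u : List X) :
    wordProd ((u.map (invLetter hsym)).reverse) = (wordProd u)⁻¹ := by
  induction u with
  | nil => simp [wordProd]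
  | cons a u ih =>
    rw [List.map_cons, List.reverse_cons, wordProd_append, ih,
      show wordProd (a :: u) = (a : G) * wordProd u from wordProd_cons a u, mul_inv_rev]
    simp [wordProd_cons, wordProd_nil, invLetter]

/-- every group element is represented by a word, given symmetric generation -/
lemma exists_word (hsym : ∀ x ∈ X, x⁻¹ ∈ X) (hgen : Subgroup.closure X = ⊤) (g : G) :
    ∃ w : List X, wordProd w = g := by
  have hg : g ∈ Subgroup.closure X := by rw [hgen]; trivial
  induction hg using Subgroup.closure_induction with
  | mem x hx => exact ⟨[⟨x, hx⟩], by simp [wordProd]⟩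
  | one => exact ⟨[], rfl⟩
  | mul x y _ _ hx hy =>
    obtain ⟨u, hu⟩ := hx; obtain ⟨v, hv⟩ := hy
    exact ⟨u ++ v, by rw [wordProd_append, hu, hv]⟩
  | inv x _ hx =>
    obtain ⟨u, hu⟩ := hx
    exact ⟨(u.map (invLetter hsym)).reverse, by rw [wordProd_invWord hsym, hu]⟩

lemma exists_geodesic (hsym : ∀ x ∈ X, x⁻¹ ∈ X) (hgen : Subgroup.closure X = ⊤) (g : G) :
    ∃ w : List X, wordProd w = g ∧ IsGeodesic X w := by
  obtain ⟨w0, hw0⟩ := exists_word hsym hgen g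
  have hex : ∃ k, ∃ w : List X, wordProd w = g ∧ w.length = k := ⟨w0.length, w0, hw0, rfl⟩
  classical
  obtain ⟨w, hw, hlen⟩ := Nat.find_spec hex
  refine ⟨w, hw, ?_⟩
  intro v hv
  rw [hlen]
  exact Nat.find_min' hex ⟨v, by rw [hv, hw], rfl⟩

lemma isGeodesic_prefix {u v : List X} (h : IsGeodesic X (u ++ v)) : IsGeodesic X u := by
  intro w hw
  have := h (w ++ v) (by rw [wordProd_append, wordProd_append, hw])
  simpa using this

end LTGeo

namespace LTGeo

variable {G : Type*} [Group G] {X : Set G}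

open scoped commutatorElement

lemma geo_iff_letters (hLT : LocallyTestable 1 (Geo X)) {u v : List X}
    (h : ∀ x, x ∈ u ↔ x ∈ v) : IsGeodesic X u ↔ IsGeodesic X v :=
  hLT u v (simK_one_of_letters h)

lemma geodesic_listPow (hLT : LocallyTestable 1 (Geo X)) {w : List X}
    (hw : IsGeodesic X w) {n : ℕ} (hn : 0 < n) : IsGeodesic X (listPow w n) :=
  (geo_iff_letters hLT (fun x => mem_listPow hn x)).mpr hw

lemma torsionfree (hsym : ∀ x ∈ X, x⁻¹ ∈ X) (hgen : Subgroup.closure X = ⊤)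
    (hLT : LocallyTestable 1 (Geo X)) {g : G} (hg : g ≠ 1) {n : ℕ} (hn : 0 < n) :
    g ^ n ≠ 1 := by
  obtain ⟨w, hw, hgeo⟩ := exists_geodesic hsym hgen g
  have hwne : w ≠ [] := by rintro rfl; exact hg hw.symm
  intro h1
  have hgeo' := geodesic_listPow hLT hgeo hn
  have hle := hgeo' [] (by rw [wordProd_nil, wordProd_listPow, hw, h1])
  rw [length_listPow] at hle
  simp only [List.length_nil, Nat.le_zero, Nat.mul_eq_zero] at hle
  rcases hle with h | h
  · omega
  · exact hwne (List.length_eq_zero_iff.mp h)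

lemma conj_letter (hsym : ∀ x ∈ X, x⁻¹ ∈ X) (hgen : Subgroup.closure X = ⊤)
    (hLT : LocallyTestable 1 (Geo X)) {a b : G} (ha : a ∈ X) (ha1 : a ≠ 1) (hb : b ∈ X) :
    b⁻¹ * a * b ∈ X := by
  have ht1 : b⁻¹ * a * b ≠ 1 := by
    intro h
    apply ha1
    have : b * (b⁻¹ * a * b) * b⁻¹ = b * 1 * b⁻¹ := by rw [h]
    simpa [mul_assoc] using this
  obtain ⟨w, hw, hgeo⟩ := exists_geodesic hsym hgen (b⁻¹ * a * b)
  match w, hw, hgeo with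
  | [], hw, _ => exact absurd hw.symm ht1
  | [c], hw, _ =>
    have : (c : G) = b⁻¹ * a * b := by simpa [wordProd_cons, wordProd_nil] using hw
    rw [← this]; exact c.2
  | c :: d :: w', hw, hgeo =>
    exfalso
    have hgeo3 := geodesic_listPow hLT hgeo (n := 3) (by norm_num)
    have hu : wordProd ((⟨b⁻¹, hsym b hb⟩ : X) ::
        (List.replicate 3 (⟨a, ha⟩ : X) ++ [(⟨b, hb⟩ : X)])) = (b⁻¹ * a * b) ^ 3 := by
      simp [wordProd, pow_three', mul_assoc]
    have hle := hgeo3 _ (by rw [hu, wordProd_listPow, hw])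
    rw [length_listPow] at hle
    simp at hle
    omega

lemma conj_all (hsym : ∀ x ∈ X, x⁻¹ ∈ X) (hgen : Subgroup.closure X = ⊤)
    (hLT : LocallyTestable 1 (Geo X)) {a : G} (ha : a ∈ X) (ha1 : a ≠ 1) (g : G) :
    g⁻¹ * a * g ∈ X := by
  obtain ⟨w, rfl⟩ := exists_word hsym hgen g
  induction w generalizing a with
  | nil => simpa [wordProd_nil] using ha
  | cons x w ih =>
    have hx : (x : G)⁻¹ * a * x ∈ X := conj_letter hsym hgen hLT ha ha1 x.2
    have hx1 : (x : G)⁻¹ * a * x ≠ 1 := by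
      intro h
      apply ha1
      have : (x : G) * ((x : G)⁻¹ * a * x) * (x : G)⁻¹ = x * 1 * (x : G)⁻¹ := by rw [h]
      simpa [mul_assoc] using this
    have hmem := ih hx hx1
    have heq : (wordProd (x :: w))⁻¹ * a * wordProd (x :: w)
        = (wordProd w)⁻¹ * ((x : G)⁻¹ * a * (x : G)) * wordProd w := by
      rw [wordProd_cons]; group
    rw [heq]; exact hmem

lemma center_of_commute_letters (hsym : ∀ x ∈ X, x⁻¹ ∈ X) (hgen : Subgroup.closure X = ⊤)
    {c : G} (h : ∀ x ∈ X, x * c = c * x) : c ∈ Subgroup.center G := by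
  rw [Subgroup.mem_center_iff]
  intro g
  obtain ⟨w, rfl⟩ := exists_word hsym hgen g
  induction w with
  | nil => simp [wordProd_nil]
  | cons x w ih =>
    rw [wordProd_cons, mul_assoc, ih, ← mul_assoc, h x x.2, mul_assoc]

lemma central_conj {G : Type*} [Group G] {z : G} (hz : z ∈ Subgroup.center G) (c : G) :
    z * c * z⁻¹ = c := by
  rw [← Subgroup.mem_center_iff.mp hz c, mul_inv_cancel_right]

lemma conj_central {z : G} (hz : z ∈ Subgroup.center G) (a c : G) :
    (a * z) * c * (a * z)⁻¹ = a * c * a⁻¹ := by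
  have h1 : z * c * z⁻¹ = c := central_conj hz c
  have h2 : (a * z) * c * (a * z)⁻¹ = a * (z * c * z⁻¹) * a⁻¹ := by
    rw [mul_inv_rev]; simp [mul_assoc]
  rw [h2, h1]

lemma comm_left_center {z : G} (hz : z ∈ Subgroup.center G) (a c : G) :
    ⁅a * z, c⁆ = ⁅a, c⁆ := by
  rw [commutatorElement_def, commutatorElement_def, conj_central hz]

lemma comm_eq_of_center {z w : G} (hz : z ∈ Subgroup.center G)
    (hw : w ∈ Subgroup.center G) (a b : G) : ⁅a * z, b * w⁆ = ⁅a, b⁆ := by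
  rw [← commutatorElement_inv (b * w) (a * z), comm_left_center hw,
    commutatorElement_inv, comm_left_center hz]

lemma finite_quotient_center (hfin : X.Finite) (hsym : ∀ x ∈ X, x⁻¹ ∈ X)
    (hgen : Subgroup.closure X = ⊤) (hLT : LocallyTestable 1 (Geo X)) :
    Finite (G ⧸ Subgroup.center G) := by
  classical
  set Y : Set G := X ∩ {x | x ≠ 1} with hY
  have hYfin : Y.Finite := hfin.inter_of_left _
  haveI := hYfin.to_subtype
  have hconj : ∀ (g : G) (y : Y), g⁻¹ * (y : G) * g ∈ Y := by
    rintro g ⟨y, hy, hy1⟩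
    refine ⟨conj_all hsym hgen hLT hy hy1 g, ?_⟩
    intro h
    apply hy1
    have : g * (g⁻¹ * y * g) * g⁻¹ = g * 1 * g⁻¹ := by rw [h]
    simpa [mul_assoc] using this
  let f : G → (Y → Y) := fun g y => ⟨g⁻¹ * y * g, hconj g y⟩
  have hwd : ∀ g h : G,
      @Setoid.r _ (QuotientGroup.leftRel (Subgroup.center G)) g h → f g = f h := by
    intro g h hr
    rw [QuotientGroup.leftRel_apply] at hr
    obtain ⟨z, hz⟩ : ∃ z, z ∈ Subgroup.center G ∧ h = g * z :=
      ⟨g⁻¹ * h, hr, by simp [mul_assoc]⟩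
    funext y
    apply Subtype.ext
    show g⁻¹ * y * g = h⁻¹ * y * h
    rw [hz.2, mul_inv_rev]
    have hzc := Subgroup.mem_center_iff.mp hz.1
    have hzic := Subgroup.mem_center_iff.mp (Subgroup.inv_mem _ hz.1)
    calc g⁻¹ * (y : G) * g = z⁻¹ * (g⁻¹ * y * g) * z := by
          have h7 := central_conj (Subgroup.inv_mem _ hz.1) (g⁻¹ * (y : G) * g)
          rw [inv_inv] at h7
          exact h7.symm
      _ = z⁻¹ * g⁻¹ * (y : G) * (g * z) := by simp [mul_assoc]
  let F : G ⧸ Subgroup.center G → (Y → Y) := fun q => Quotient.liftOn' q f hwd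
  have hFinj : Function.Injective F := by
    intro q1 q2
    induction q1 using Quotient.inductionOn' with | h g =>
    induction q2 using Quotient.inductionOn' with | h h =>
    intro hfe
    have hfe : f g = f h := hfe
    apply Quotient.sound'
    rw [QuotientGroup.leftRel_apply]
    have hc : g * h⁻¹ ∈ Subgroup.center G := by
      apply center_of_commute_letters hsym hgen
      intro x hx
      by_cases hx1 : x = 1
      · simp [hx1]
      · have heq : g⁻¹ * x * g = h⁻¹ * x * h := by
          have := congrFun hfe ⟨x, hx, hx1⟩
          exact Subtype.ext_iff.mp this
        calc x * (g * h⁻¹) = g * (g⁻¹ * x * g) * h⁻¹ := by simp [mul_assoc]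
          _ = g * (h⁻¹ * x * h) * h⁻¹ := by rw [heq]
          _ = (g * h⁻¹) * x := by simp [mul_assoc]
    have hc2 : h * g⁻¹ ∈ Subgroup.center G := by
      have := Subgroup.inv_mem _ hc; rwa [mul_inv_rev, inv_inv] at this
    have hcomm := Subgroup.mem_center_iff.mp hc2 g
    have he : g⁻¹ * h = h * g⁻¹ := by
      have h5 : g⁻¹ * (g * (h * g⁻¹)) = g⁻¹ * ((h * g⁻¹) * g) := by rw [hcomm]
      simpa [mul_assoc] using h5.symm
    rw [he]; exact hc2
  exact Finite.of_injective F hFinj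

lemma finite_commutatorSet (hfin : X.Finite) (hsym : ∀ x ∈ X, x⁻¹ ∈ X)
    (hgen : Subgroup.closure X = ⊤) (hLT : LocallyTestable 1 (Geo X)) :
    Finite (commutatorSet G) := by
  classical
  haveI := finite_quotient_center hfin hsym hgen hLT
  have hwd : ∀ (a b a' b' : G),
      @Setoid.r _ (QuotientGroup.leftRel (Subgroup.center G)) a a' →
      @Setoid.r _ (QuotientGroup.leftRel (Subgroup.center G)) b b' → ⁅a, b⁆ = ⁅a', b'⁆ := by
    intro a b a' b' ha hb
    rw [QuotientGroup.leftRel_apply] at ha hb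
    have ha' : a' = a * (a⁻¹ * a') := by simp [mul_assoc]
    have hb' : b' = b * (b⁻¹ * b') := by simp [mul_assoc]
    rw [ha', hb', comm_eq_of_center ha hb]
  let F2 : G ⧸ Subgroup.center G → G ⧸ Subgroup.center G → G :=
    fun q1 q2 => Quotient.liftOn₂' q1 q2 (fun a b => ⁅a, b⁆) hwd
  have hsub : commutatorSet G ⊆
      Set.range (fun p : (G ⧸ Subgroup.center G) × (G ⧸ Subgroup.center G) => F2 p.1 p.2) := by
    rintro _ ⟨g, h, rfl⟩
    exact ⟨(Quotient.mk'' g, Quotient.mk'' h), by simp [F2, Quotient.liftOn₂'_mk'']⟩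
  exact (Set.Finite.subset (Set.finite_range _) hsub).to_subtype

lemma mul_comm_of (hfin : X.Finite) (hsym : ∀ x ∈ X, x⁻¹ ∈ X)
    (hgen : Subgroup.closure X = ⊤) (hLT : LocallyTestable 1 (Geo X)) (a b : G) :
    a * b = b * a := by
  haveI := finite_commutatorSet hfin hsym hgen hLT
  haveI : Finite (_root_.commutator G) := inferInstance
  rw [← commutatorElement_eq_one_iff_mul_comm]
  by_contra hne
  have hmem : ⁅a, b⁆ ∈ _root_.commutator G := by
    rw [commutator_def]
    exact Subgroup.commutator_mem_commutator (Subgroup.mem_top a) (Subgroup.mem_top b)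
  set c : _root_.commutator G := ⟨⁅a, b⁆, hmem⟩ with hc
  have hpos : 0 < orderOf c := orderOf_pos c
  have hone : c ^ orderOf c = 1 := pow_orderOf_eq_one c
  have hone' : ⁅a, b⁆ ^ orderOf c = 1 := by
    have := congrArg (Subtype.val) hone
    simpa only [Subgroup.coe_pow, Subgroup.coe_one] using this
  exact torsionfree hsym hgen hLT hne hpos hone'

lemma free_abelian_of (hfin : X.Finite) (hsym : ∀ x ∈ X, x⁻¹ ∈ X)
    (hgen : Subgroup.closure X = ⊤) (hLT : LocallyTestable 1 (Geo X)) :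
    ∃ n : ℕ, Nonempty (G ≃* Multiplicative (Fin n → ℤ)) := by
  have hcomm := mul_comm_of hfin hsym hgen hLT
  letI : CommGroup G := { (inferInstance : Group G) with mul_comm := hcomm }
  have hFG : Group.FG G := Group.fg_iff.mpr ⟨X, hgen, hfin⟩
  haveI : AddGroup.FG (Additive G) := GroupFG.iff_add_fg.mp hFG
  haveI : Module.Finite ℤ (Additive G) := Module.Finite.iff_addGroup_fg.mpr ‹_›
  haveI : NoZeroSMulDivisors ℤ (Additive G) := by
    apply @IsAddTorsionFree.to_noZeroSMulDivisors_int _ _ (IsAddTorsionFree.of_not_isOfFinAddOrder ?_)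
    intro g hg hford
    obtain ⟨m, hm, hsm⟩ := isOfFinAddOrder_iff_nsmul_eq_zero.mp hford
    have : (Additive.toMul g) ^ m = 1 := by
      rw [← toMul_nsmul, hsm]; rfl
    exact torsionfree hsym hgen hLT (by simpa using hg) hm this
  obtain ⟨n, b⟩ := Module.basisOfFiniteTypeTorsionFree' (R := ℤ) (M := Additive G)
  refine ⟨n, ⟨?_⟩⟩
  exact (MulEquiv.multiplicativeAdditive G).symm.trans
    (AddEquiv.toMultiplicative b.equivFun.toAddEquiv)

/-! ### The free abelian group `ℤⁿ` with standard generators -/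

section Zn

variable {n : ℕ}

local notation "A" => (Fin n → ℤ)

/-- The `i`-th standard basis vector. -/
def zunit (i : Fin n) : Fin n → ℤ := Pi.single i 1

/-- The standard symmetric generating set of `Multiplicative (Fin n → ℤ)`. -/
def XH (n : ℕ) : Set (Multiplicative (Fin n → ℤ)) :=
  {x | ∃ i : Fin n, x.toAdd = zunit i ∨ x.toAdd = - zunit i}

/-- The ℓ¹ norm. -/
def l1 (g : Fin n → ℤ) : ℕ := ∑ i, (g i).natAbs

lemma zunit_apply (i j : Fin n) : zunit i j = if j = i then 1 else 0 := by
  simp [zunit, Pi.single_apply]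

lemma zunit_ne_neg (i j : Fin n) : zunit i ≠ - zunit j := by
  intro h
  have := congrFun h i
  simp [zunit_apply] at this
  by_cases hij : i = j <;> simp [hij] at this <;> omega

lemma zunit_inj {i j : Fin n} (h : zunit i = zunit j) : i = j := by
  by_contra hij
  have := congrFun h i
  simp [zunit_apply, hij] at this

lemma neg_zunit_inj {i j : Fin n} (h : - zunit i = - zunit j) : i = j :=
  zunit_inj (by rw [← neg_neg (zunit i), h, neg_neg])

/-- Shape hypothesis: all entries of the list are `± zunit i`. -/
def Shaped (l : List (Fin n → ℤ)) : Prop := ∀ a ∈ l, ∃ i, a = zunit i ∨ a = - zunit i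

lemma coord_count {l : List (Fin n → ℤ)} (hl : Shaped l) (i : Fin n) :
    l.sum i = (l.count (zunit i) : ℤ) - (l.count (- zunit i) : ℤ) := by
  induction l with
  | nil => simp
  | cons a l ih =>
    have hal : Shaped l := fun b hb => hl b (List.mem_cons_of_mem a hb)
    obtain ⟨j, hj⟩ := hl a List.mem_cons_self
    have hsum : (a :: l).sum i = a i + l.sum i := by simp
    rw [hsum, ih hal, List.count_cons, List.count_cons]
    rcases hj with hj | hj <;> subst hj
    · by_cases hij : i = j
      · subst hij
        have e1 : ¬ ((zunit i : Fin n → ℤ) = - zunit i) := zunit_ne_neg i i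
        simp [zunit_apply, beq_iff_eq, e1]
        try ring
      · have e1 : ¬ ((zunit j : Fin n → ℤ) = zunit i) := fun h => hij (zunit_inj h).symm
        have e2 : ¬ ((zunit j : Fin n → ℤ) = - zunit i) := zunit_ne_neg j i
        simp [zunit_apply, beq_iff_eq, e1, e2, hij]
        try ring
    · by_cases hij : i = j
      · subst hij
        have e1 : ¬ ((- zunit i : Fin n → ℤ) = zunit i) := fun h => zunit_ne_neg i i h.symm
        simp [zunit_apply, beq_iff_eq, e1]
        try ring
      · have e1 : ¬ ((- zunit j : Fin n → ℤ) = zunit i) := fun h => zunit_ne_neg i j h.symm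
        have e2 : ¬ ((- zunit j : Fin n → ℤ) = - zunit i) := fun h => hij (neg_zunit_inj h).symm
        simp [zunit_apply, beq_iff_eq, e1, e2, hij]
        try ring

lemma length_count {l : List (Fin n → ℤ)} (hl : Shaped l) :
    l.length = ∑ i, (l.count (zunit i) + l.count (- zunit i)) := by
  induction l with
  | nil => simp
  | cons a l ih =>
    have hal : Shaped l := fun b hb => hl b (List.mem_cons_of_mem a hb)
    obtain ⟨j, hj⟩ := hl a List.mem_cons_self
    simp only [List.length_cons, ih hal, List.count_cons, beq_iff_eq]
    have hsplit : ∑ x : Fin n, ((l.count (zunit x) + if a = zunit x then 1 else 0) +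
        (l.count (- zunit x) + if a = - zunit x then 1 else 0))
        = ∑ x : Fin n, (l.count (zunit x) + l.count (- zunit x))
          + ∑ x : Fin n, ((if a = zunit x then 1 else 0) +
            (if a = - zunit x then 1 else 0)) := by
      rw [← Finset.sum_add_distrib]
      apply Finset.sum_congr rfl
      intros
      ring
    have hT : ∑ x : Fin n, ((if a = zunit x then 1 else 0) +
        (if a = - zunit x then 1 else 0)) = 1 := by
      have hcong : ∀ x ∈ Finset.univ, ((if a = zunit x then 1 else 0) +
          (if a = - zunit x then 1 else 0)) = if x = j then 1 else 0 := by
        intro x _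
        rcases hj with hj | hj <;> subst hj <;> by_cases hxj : x = j
        · subst hxj
          have e1 : ¬ ((zunit x : Fin n → ℤ) = - zunit x) := zunit_ne_neg x x
          simp [e1]
        · have e1 : ¬ ((zunit j : Fin n → ℤ) = zunit x) := fun h => hxj (zunit_inj h).symm
          have e2 : ¬ ((zunit j : Fin n → ℤ) = - zunit x) := zunit_ne_neg j x
          simp [e1, e2, hxj]
        · subst hxj
          have e1 : ¬ ((- zunit x : Fin n → ℤ) = zunit x) := fun h => zunit_ne_neg x x h.symm
          simp [e1]
        · have e1 : ¬ ((- zunit j : Fin n → ℤ) = zunit x) := fun h => zunit_ne_neg x j h.symm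
          have e2 : ¬ ((- zunit j : Fin n → ℤ) = - zunit x) := fun h => hxj (neg_zunit_inj h).symm
          simp [e1, e2, hxj]
      rw [Finset.sum_congr rfl hcong, Finset.sum_ite_eq' Finset.univ j (fun _ => 1)]
      simp
    rw [hsplit, hT]

lemma l1_sum_le {l : List (Fin n → ℤ)} (hl : Shaped l) : l1 l.sum ≤ l.length := by
  rw [length_count hl, l1]
  apply Finset.sum_le_sum
  intro i _
  rw [coord_count hl i]
  omega

lemma length_eq_l1 {l : List (Fin n → ℤ)} (hl : Shaped l)
    (hno : ∀ i, zunit i ∉ l ∨ - zunit i ∉ l) : l.length = l1 l.sum := by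
  rw [length_count hl, l1]
  apply Finset.sum_congr rfl
  intro i _
  rw [coord_count hl i]
  rcases hno i with h | h <;> rw [List.count_eq_zero_of_not_mem h] <;> omega

/-- The additive letters of a word over `XH n`. -/
def dw (w : List (XH n)) : List (Fin n → ℤ) :=
  w.map (fun x => Multiplicative.toAdd (Subtype.val x))

lemma shaped_dw (w : List (XH n)) : Shaped (dw w) := by
  intro a ha
  obtain ⟨x, hx, rfl⟩ := List.mem_map.mp ha
  exact x.2

lemma length_dw (w : List (XH n)) : (dw w).length = w.length := by simp [dw]

lemma wordProd_toAdd (w : List (XH n)) :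
    Multiplicative.toAdd (wordProd w) = (dw w).sum := by
  induction w with
  | nil => simp [wordProd_nil, dw]
  | cons x w ih =>
    have hd : dw (x :: w) = Multiplicative.toAdd (Subtype.val x) :: dw w := rfl
    rw [wordProd_cons, hd, List.sum_cons, ← ih]
    rfl

lemma mem_dw {w : List (XH n)} {a : Fin n → ℤ} :
    a ∈ dw w ↔ ∃ x ∈ w, Multiplicative.toAdd (Subtype.val x) = a := by
  simp [dw]

lemma canonical : ∀ (k : ℕ) (g : Fin n → ℤ), l1 g = k →
    ∃ w : List (XH n), wordProd w = Multiplicative.ofAdd g ∧ w.length = k := by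
  intro k
  induction k using Nat.strong_induction_on with | _ k ih =>
  intro g hg
  rcases Nat.eq_zero_or_pos k with hk | hk
  · subst hk
    have hg0 : g = 0 := by
      funext i
      have := (Finset.sum_eq_zero_iff.mp hg) i (Finset.mem_univ i)
      simpa [Int.natAbs_eq_zero] using this
    exact ⟨[], by rw [wordProd_nil, hg0]; simp, rfl⟩
  · have hne : ∑ i, (g i).natAbs ≠ 0 := by rw [← l1]; omega
    obtain ⟨i, _, hi⟩ := Finset.exists_ne_zero_of_sum_ne_zero hne
    set a : Fin n → ℤ := if 0 < g i then zunit i else - zunit i with ha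
    have hxmem : Multiplicative.ofAdd a ∈ XH n := by
      refine ⟨i, ?_⟩
      rcases le_or_gt (g i) 0 with h | h <;> simp [ha, h, h.not_gt] <;> try simp [h]
    have haj : ∀ j, j ≠ i → a j = 0 := by
      intro j hj
      rcases le_or_gt (g i) 0 with h | h <;>
        simp [ha, h, h.not_gt, zunit_apply, hj] <;> simp [zunit_apply, hj]
    have hai : a i = if 0 < g i then 1 else -1 := by
      rcases le_or_gt (g i) 0 with h | h <;>
        simp [ha, h, h.not_gt, zunit_apply] <;> simp [zunit_apply]
    set g' : Fin n → ℤ := g - a with hg'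
    have hcoord : ∀ j, j ≠ i → g' j = g j := by
      intro j hj; simp [hg', haj j hj]
    have hL : l1 g' = k - 1 := by
      simp only [l1] at hg ⊢
      have e1 : (g' i).natAbs + ∑ j ∈ Finset.univ.erase i, (g' j).natAbs
          = ∑ j, (g' j).natAbs :=
        Finset.add_sum_erase Finset.univ (fun j => (g' j).natAbs) (Finset.mem_univ i)
      have e2 : (g i).natAbs + ∑ j ∈ Finset.univ.erase i, (g j).natAbs
          = ∑ j, (g j).natAbs :=
        Finset.add_sum_erase Finset.univ (fun j => (g j).natAbs) (Finset.mem_univ i)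
      have e3 : ∑ j ∈ Finset.univ.erase i, (g' j).natAbs
          = ∑ j ∈ Finset.univ.erase i, (g j).natAbs :=
        Finset.sum_congr rfl (fun j hj => by rw [hcoord j (Finset.ne_of_mem_erase hj)])
      have e4 : (g' i).natAbs + 1 = (g i).natAbs := by
        have : g' i = g i - a i := by simp [hg']
        rw [hai] at this
        rcases lt_trichotomy (g i) 0 with h | h | h
        · rw [if_neg (by omega)] at this; omega
        · omega
        · rw [if_pos h] at this; omega
      omega
    obtain ⟨w', hw', hlen⟩ := ih (k - 1) (by omega) g' hL
    refine ⟨⟨Multiplicative.ofAdd a, hxmem⟩ :: w', ?_, by simp [hlen]; omega⟩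
    rw [wordProd_cons, hw']
    show Multiplicative.ofAdd a * Multiplicative.ofAdd g' = Multiplicative.ofAdd g
    rw [← ofAdd_add]
    congr 1
    simp [hg']

lemma isGeodesic_XH_iff (w : List (XH n)) :
    IsGeodesic (XH n) w ↔ ∀ i, ¬(zunit i ∈ dw w ∧ - zunit i ∈ dw w) := by
  constructor
  · intro hgeo i hi
    obtain ⟨h1, h2⟩ := hi
    set g := (dw w).sum with hgdef
    obtain ⟨W, hW, hWlen⟩ := canonical (l1 g) g rfl
    have hprod : wordProd W = wordProd w := by
      rw [hW, hgdef, ← wordProd_toAdd w, ofAdd_toAdd]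
    have hle := hgeo W hprod
    rw [hWlen] at hle
    -- lower bound : l1 g + 2 ≤ w.length
    have hc1 : 0 < (dw w).count (zunit i) := List.count_pos_iff.mpr h1
    have hc2 : 0 < (dw w).count (- zunit i) := List.count_pos_iff.mpr h2
    have hlen : w.length = ∑ j, ((dw w).count (zunit j) + (dw w).count (- zunit j)) := by
      rw [← length_dw w, length_count (shaped_dw w)]
    have hN : l1 g = ∑ j, (((dw w).count (zunit j) : ℤ)
        - ((dw w).count (- zunit j) : ℤ)).natAbs := by
      simp only [l1]
      exact Finset.sum_congr rfl (fun j _ => by rw [hgdef, coord_count (shaped_dw w) j])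
    have e1 : ((dw w).count (zunit i) + (dw w).count (- zunit i))
        + ∑ j ∈ Finset.univ.erase i, ((dw w).count (zunit j) + (dw w).count (- zunit j))
        = ∑ j, ((dw w).count (zunit j) + (dw w).count (- zunit j)) :=
      Finset.add_sum_erase Finset.univ
        (fun j => (dw w).count (zunit j) + (dw w).count (- zunit j)) (Finset.mem_univ i)
    have e2 : (((dw w).count (zunit i) : ℤ) - ((dw w).count (- zunit i) : ℤ)).natAbs
        + ∑ j ∈ Finset.univ.erase i, (((dw w).count (zunit j) : ℤ)
          - ((dw w).count (- zunit j) : ℤ)).natAbs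
        = ∑ j, (((dw w).count (zunit j) : ℤ) - ((dw w).count (- zunit j) : ℤ)).natAbs :=
      Finset.add_sum_erase Finset.univ
        (fun j => (((dw w).count (zunit j) : ℤ) - ((dw w).count (- zunit j) : ℤ)).natAbs)
        (Finset.mem_univ i)
    have e3 : ∑ j ∈ Finset.univ.erase i, (((dw w).count (zunit j) : ℤ)
          - ((dw w).count (- zunit j) : ℤ)).natAbs
        ≤ ∑ j ∈ Finset.univ.erase i, ((dw w).count (zunit j) + (dw w).count (- zunit j)) :=
      Finset.sum_le_sum (fun j _ => by omega)
    omega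
  · intro hno v hv
    have h1 : w.length = l1 ((dw w).sum) := by
      rw [← length_dw w]
      exact length_eq_l1 (shaped_dw w) (fun i => by
        by_cases h : zunit i ∈ dw w
        · exact Or.inr (fun h' => hno i ⟨h, h'⟩)
        · exact Or.inl h)
    have h2 : (dw v).sum = (dw w).sum := by
      have := congrArg Multiplicative.toAdd hv
      rwa [wordProd_toAdd, wordProd_toAdd] at this
    calc w.length = l1 ((dw v).sum) := by rw [h2, ← h1]
      _ ≤ (dw v).length := l1_sum_le (shaped_dw v)
      _ = v.length := length_dw v

lemma locallyTestable_XH : LocallyTestable 1 (Geo (XH n)) := by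
  rintro u v ⟨-, -, hsub⟩
  have hmem : ∀ x : (XH n), x ∈ u ↔ x ∈ v := by
    intro x
    have := hsub [x] rfl
    simpa [singleton_infix_iff] using this
  show IsGeodesic _ u ↔ IsGeodesic _ v
  rw [isGeodesic_XH_iff, isGeodesic_XH_iff]
  apply forall_congr'
  intro i
  have hdw : ∀ a : Fin n → ℤ, a ∈ dw u ↔ a ∈ dw v := by
    intro a
    rw [mem_dw, mem_dw]
    constructor
    · rintro ⟨x, hx, hxa⟩; exact ⟨x, (hmem x).mp hx, hxa⟩
    · rintro ⟨x, hx, hxa⟩; exact ⟨x, (hmem x).mpr hx, hxa⟩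
  rw [hdw, hdw]

lemma wordProd_mem_closure {G : Type*} [Group G] {X : Set G} (w : List X) :
    wordProd w ∈ Subgroup.closure X := by
  induction w with
  | nil => exact Subgroup.one_mem _
  | cons x w ih =>
    rw [wordProd_cons]
    exact Subgroup.mul_mem _ (Subgroup.subset_closure x.2) ih

lemma closure_XH : Subgroup.closure (XH n) = ⊤ := by
  rw [eq_top_iff]
  intro h _
  obtain ⟨w, hw, -⟩ := canonical (l1 (Multiplicative.toAdd h)) (Multiplicative.toAdd h) rfl
  rw [← ofAdd_toAdd h, ← hw]
  exact wordProd_mem_closure w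

lemma symm_XH : ∀ x ∈ XH n, x⁻¹ ∈ XH n := by
  rintro x ⟨i, hx | hx⟩
  · exact ⟨i, Or.inr (by rw [toAdd_inv, hx])⟩
  · exact ⟨i, Or.inl (by rw [toAdd_inv, hx, neg_neg])⟩

lemma finite_XH : (XH n).Finite := by
  apply Set.Finite.subset (Set.finite_range
    (fun p : Fin n × Bool =>
      Multiplicative.ofAdd (if p.2 then zunit p.1 else - zunit p.1)))
  rintro x ⟨i, hx | hx⟩
  · exact ⟨(i, true), by simp [← hx]⟩
  · exact ⟨(i, false), by simp [← hx]⟩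

end Zn




section Transport

variable {G H : Type*} [Group G] [Group H]

lemma transport (e : G ≃* H) (XH' : Set H) (hfin : XH'.Finite)
    (hsym : ∀ x ∈ XH', x⁻¹ ∈ XH') (hgen : Subgroup.closure XH' = ⊤)
    (hLT : LocallyTestable 1 (Geo XH')) :
    ∃ X : Set G, X.Finite ∧ (∀ x ∈ X, x⁻¹ ∈ X) ∧ Subgroup.closure X = ⊤ ∧
      LocallyTestable 1 (Geo X) := by
  classical
  refine ⟨⇑e ⁻¹' XH', hfin.preimage (e.injective.injOn), ?_, ?_, ?_⟩
  · intro x hx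
    show e x⁻¹ ∈ XH'
    rw [map_inv]
    exact hsym _ hx
  · have himg : ⇑e '' (⇑e ⁻¹' XH') = XH' := Set.image_preimage_eq _ e.surjective
    have hmap : (Subgroup.closure (⇑e ⁻¹' XH')).map e.toMonoidHom = ⊤ := by
      rw [MonoidHom.map_closure]
      show Subgroup.closure (⇑e '' (⇑e ⁻¹' XH')) = ⊤
      rw [himg, hgen]
    have := congrArg (Subgroup.comap e.toMonoidHom) hmap
    rwa [Subgroup.comap_map_eq_self_of_injective e.injective, Subgroup.comap_top] at this
  · intro u v hsim
    obtain ⟨-, -, hsub⟩ := hsim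
    have hmem : ∀ x, x ∈ u ↔ x ∈ v := fun x => by
      simpa [singleton_infix_iff] using hsub [x] rfl
    let φ : ↥(⇑e ⁻¹' XH') → ↥XH' := fun x => ⟨e x.1, x.2⟩
    let F : List ↥(⇑e ⁻¹' XH') → List ↥XH' := fun w => w.map φ
    have hFprod : ∀ w, wordProd (F w) = e (wordProd w) := by
      intro w
      induction w with
      | nil => simp [wordProd_nil, F]
      | cons x w ih =>
        rw [show F (x :: w) = φ x :: F w from rfl, wordProd_cons, wordProd_cons, ih, map_mul]
    have hFlen : ∀ w, (F w).length = w.length := fun w => List.length_map _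
    have hGeoF : ∀ w, IsGeodesic (⇑e ⁻¹' XH') w ↔ IsGeodesic XH' (F w) := by
      intro w
      constructor
      · intro hw v' hv'
        let ψ : ↥XH' → ↥(⇑e ⁻¹' XH') := fun y => ⟨e.symm y.1, by
          show e (e.symm y.1) ∈ XH'
          rw [e.apply_symm_apply]
          exact y.2⟩
        have hφψ : ∀ y, φ (ψ y) = y := fun y => Subtype.ext (e.apply_symm_apply y.1)
        have hFψ : F (v'.map ψ) = v' := by
          show (v'.map ψ).map φ = v'
          rw [List.map_map]
          have : φ ∘ ψ = id := funext hφψ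
          rw [this, List.map_id]
        have hpr : wordProd (v'.map ψ) = wordProd w := by
          apply e.injective
          rw [← hFprod, hFψ, hv', hFprod]
        have hle := hw _ hpr
        calc (F w).length = w.length := hFlen w
          _ ≤ (v'.map ψ).length := hle
          _ = v'.length := List.length_map _
      · intro hw v hv
        have := hw (F v) (by rw [hFprod, hFprod, hv])
        rwa [hFlen, hFlen] at this
    have hsim' : SimK 1 (F u) (F v) := by
      apply simK_one_of_letters
      intro y
      show y ∈ u.map φ ↔ y ∈ v.map φ
      rw [List.mem_map, List.mem_map]
      constructor
      · rintro ⟨x, hx, rfl⟩; exact ⟨x, (hmem x).mp hx, rfl⟩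
      · rintro ⟨x, hx, rfl⟩; exact ⟨x, (hmem x).mpr hx, rfl⟩
    have hGeo := hLT (F u) (F v) hsim'
    show IsGeodesic _ u ↔ IsGeodesic _ v
    rw [hGeoF u, hGeoF v]
    exact hGeo

end Transport

end LTGeo

/-- A finitely generated group is free abelian (≅ ℤⁿ for some n) iff it has a finite
symmetric generating set whose language of geodesics is 1-locally testable. -/
theorem stmt0 {G : Type*} [Group G]
    (hfg : ∃ S : Set G, S.Finite ∧ Subgroup.closure S = ⊤) :
    (∃ n : ℕ, Nonempty (G ≃* Multiplicative (Fin n → ℤ))) ↔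
      (∃ X : Set G, X.Finite ∧ (∀ x ∈ X, x⁻¹ ∈ X) ∧ Subgroup.closure X = ⊤ ∧
        LocallyTestable 1 (Geo X)) := by
  constructor
  · rintro ⟨n, ⟨e⟩⟩
    exact LTGeo.transport e (LTGeo.XH n) LTGeo.finite_XH LTGeo.symm_XH LTGeo.closure_XH
      LTGeo.locallyTestable_XH
  · rintro ⟨X, hfin, hsym, hgen, hLT⟩
    exact LTGeo.free_abelian_of hfin hsym hgen hLT
end

section
/- Let G be a finitely generated group with a finite symmetric generating set X, and let L = Geo(G,X). If w ∼_L w² for every nonempty word w over X (i.e. the syntactic semigroup of Geo(G,X) is idempotent), then G is a free abelian group (isomorphic to ℤⁿ for some n ≥ 0). -/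
section Aux

variable {G : Type*} [Group G] {X : Set G}

lemma wordProd_append (u v : List X) : wordProd (u ++ v) = wordProd u * wordProd v := by
  simp [wordProd]

lemma listPow_length (w : List X) (n : ℕ) : (listPow w n).length = n * w.length := by
  induction n with
  | zero => simp [listPow]
  | succ m ih => simp [listPow, ih]; ring

lemma wordProd_listPow (w : List X) (n : ℕ) : wordProd (listPow w n) = (wordProd w) ^ n := by
  induction n with
  | zero => simp [listPow, wordProd]
  | succ m ih => rw [listPow, wordProd_append, ih, pow_succ']

lemma exists_word_inv (hsym : ∀ x ∈ X, x⁻¹ ∈ X) (w : List X) :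
    ∃ v : List X, wordProd v = (wordProd w)⁻¹ := by
  induction w with
  | nil => exact ⟨[], by simp [wordProd]⟩
  | cons a t ih =>
      obtain ⟨v, hv⟩ := ih
      refine ⟨v ++ [⟨(a : G)⁻¹, hsym _ a.2⟩], ?_⟩
      have h1 : wordProd (a :: t) = (a : G) * wordProd t := by simp [wordProd]
      have h2 : wordProd [(⟨(a : G)⁻¹, hsym _ a.2⟩ : X)] = (a : G)⁻¹ := by simp [wordProd]
      rw [wordProd_append, hv, h2, h1, mul_inv_rev]

lemma exists_word (hsym : ∀ x ∈ X, x⁻¹ ∈ X) (hgen : Subgroup.closure X = ⊤) (g : G) :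
    ∃ w : List X, wordProd w = g := by
  have hg : g ∈ Subgroup.closure X := by rw [hgen]; trivial
  induction hg using Subgroup.closure_induction with
  | mem x hx => exact ⟨[⟨x, hx⟩], by simp [wordProd]⟩
  | one => exact ⟨[], by simp [wordProd]⟩
  | mul x y _ _ hx hy =>
      obtain ⟨u, hu⟩ := hx
      obtain ⟨v, hv⟩ := hy
      exact ⟨u ++ v, by rw [wordProd_append, hu, hv]⟩
  | inv x _ hx =>
      obtain ⟨u, hu⟩ := hx
      obtain ⟨v, hv⟩ := exists_word_inv hsym u
      exact ⟨v, by rw [hv, hu]⟩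

lemma geo_listPow (hidem : ∀ w : List X, w ≠ [] → SynCong (Geo X) w (w ++ w))
    {w : List X} (hw : w ∈ Geo X) (hne : w ≠ []) (n : ℕ) : listPow w (n + 1) ∈ Geo X := by
  induction n with
  | zero => simpa [listPow] using hw
  | succ m ih =>
      have h := hidem w hne [] (listPow w m)
      simp only [List.nil_append] at h
      have h2 : (w ++ w) ++ listPow w m ∈ Geo X := by
        apply h.mp
        simpa [listPow] using ih
      simpa [listPow, List.append_assoc] using h2

lemma conj_pow_formula (a b : G) (n : ℕ) : (a * b) ^ (n + 1) = a * (b * a) ^ n * b := by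
  induction n with
  | zero => simp
  | succ m ih =>
      rw [pow_succ, ih, pow_succ]
      simp [mul_assoc]

end Aux

/-- If the syntactic semigroup of `Geo(G,X)` is idempotent (every nonempty word `w`
is syntactically congruent to `w²`), then `G` is free abelian. -/
theorem stmt1 {G : Type*} [Group G] (X : Set G)
    (hfin : X.Finite) (hsym : ∀ x ∈ X, x⁻¹ ∈ X) (hgen : Subgroup.closure X = ⊤)
    (hidem : ∀ w : List X, w ≠ [] → SynCong (Geo X) w (w ++ w)) :
    ∃ n : ℕ, Nonempty (G ≃* Multiplicative (Fin n → ℤ)) := by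
  classical
  haveI : Finite X := hfin.to_subtype
  -- the length function
  have hex : ∀ g : G, ∃ n : ℕ, ∃ w : List X, w.length = n ∧ wordProd w = g := by
    intro g
    obtain ⟨w, hw⟩ := exists_word hsym hgen g
    exact ⟨w.length, w, rfl, hw⟩
  set ℓ : G → ℕ := fun g => Nat.find (hex g) with hℓ
  have hspec : ∀ g : G, ∃ w : List X, w.length = ℓ g ∧ wordProd w = g := fun g =>
    Nat.find_spec (hex g)
  have hmin : ∀ (g : G) (w : List X), wordProd w = g → ℓ g ≤ w.length := fun g w hw =>
    Nat.find_min' (hex g) ⟨w, rfl, hw⟩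
  have hgeo : ∀ g : G, ∃ w : List X, w.length = ℓ g ∧ wordProd w = g ∧ w ∈ Geo X := by
    intro g
    obtain ⟨w, hl, hw⟩ := hspec g
    refine ⟨w, hl, hw, ?_⟩
    intro v hv
    have := hmin g v (hv.trans hw)
    omega
  have hlen : ∀ w : List X, w ∈ Geo X → w.length = ℓ (wordProd w) := by
    intro w hw
    obtain ⟨v, hl, hv, _⟩ := hgeo (wordProd w)
    have h1 := hmin (wordProd w) w rfl
    have h2 := hw v hv
    omega
  have hzero : ∀ g : G, ℓ g = 0 ↔ g = 1 := by
    intro g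
    constructor
    · intro h
      obtain ⟨w, hl, hw⟩ := hspec g
      rw [h, List.length_eq_zero_iff] at hl
      subst hl
      simpa [wordProd] using hw.symm
    · intro h
      subst h
      exact Nat.le_zero.mp (hmin 1 [] (by simp [wordProd]))
  -- powers
  have hpow : ∀ (g : G) (n : ℕ), ℓ (g ^ (n + 1)) = (n + 1) * ℓ g := by
    intro g n
    obtain ⟨w, hl, hw, hgeod⟩ := hgeo g
    by_cases hne : w = []
    · subst hne
      have hg : g = 1 := by simpa [wordProd] using hw.symm
      subst hg
      have h0 : ℓ (1 : G) = 0 := (hzero 1).mpr rfl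
      simp [h0]
    · have h2 := geo_listPow hidem hgeod hne n
      have h3 := hlen _ h2
      rw [wordProd_listPow, hw, listPow_length] at h3
      rw [← h3, hl]
  -- torsion-freeness
  have htf : ∀ (g : G) (n : ℕ), g ^ (n + 1) = 1 → g = 1 := by
    intro g n h
    have h1 := hpow g n
    rw [h, (hzero 1).mpr rfl] at h1
    have : ℓ g = 0 := by
      rcases Nat.mul_eq_zero.mp h1.symm with h' | h'
      · omega
      · exact h'
    exact (hzero g).mp this
  -- subadditivity
  have hsub : ∀ a b : G, ℓ (a * b) ≤ ℓ a + ℓ b := by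
    intro a b
    obtain ⟨u, hu, hua⟩ := hspec a
    obtain ⟨v, hv, hvb⟩ := hspec b
    have := hmin (a * b) (u ++ v) (by rw [wordProd_append, hua, hvb])
    simpa [hu, hv] using this
  -- ℓ (a*b) = ℓ (b*a)
  have key : ∀ a b : G, ℓ (b * a) ≤ ℓ (a * b) := by
    intro a b
    by_contra hlt
    push_neg at hlt
    have hB : ℓ (a * b) + 1 ≤ ℓ (b * a) := hlt
    have hn : ∀ n : ℕ, (n + 1) * ℓ (b * a) ≤ (n + 2) * ℓ (a * b) + (ℓ a⁻¹ + ℓ b⁻¹) := by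
      intro n
      have e : (b * a) ^ (n + 1) = a⁻¹ * ((a * b) ^ (n + 2) * b⁻¹) := by
        rw [show n + 2 = (n + 1) + 1 from rfl, conj_pow_formula a b (n + 1)]
        simp [mul_assoc]
      calc (n + 1) * ℓ (b * a) = ℓ ((b * a) ^ (n + 1)) := (hpow (b * a) n).symm
        _ = ℓ (a⁻¹ * ((a * b) ^ (n + 2) * b⁻¹)) := by rw [e]
        _ ≤ ℓ a⁻¹ + (ℓ ((a * b) ^ (n + 2)) + ℓ b⁻¹) :=
            le_trans (hsub _ _) (by gcongr; exact hsub _ _)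
        _ = ℓ ((a * b) ^ ((n + 1) + 1)) + (ℓ a⁻¹ + ℓ b⁻¹) := by ring_nf
        _ = (n + 2) * ℓ (a * b) + (ℓ a⁻¹ + ℓ b⁻¹) := by rw [hpow (a * b) (n + 1)]
    set A := ℓ (a * b)
    set D := ℓ a⁻¹ + ℓ b⁻¹
    have h := hn (A + D + 1)
    nlinarith [h, hB]
  have hlcomm : ∀ a b : G, ℓ (a * b) = ℓ (b * a) := fun a b =>
    le_antisymm (key b a) (key a b)
  -- conjugation invariance
  have hconj : ∀ a g : G, ℓ (a * g * a⁻¹) = ℓ g := by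
    intro a g
    have h := hlcomm (a * g) a⁻¹
    rw [show a⁻¹ * (a * g) = g by group] at h
    exact h
  -- finiteness of spheres
  have hfinconj : ∀ g : G, {x : G | ℓ x = ℓ g}.Finite := by
    intro g
    have h1 : {w : List X | w.length = ℓ g}.Finite := List.finite_length_eq _ _
    refine (h1.image wordProd).subset ?_
    intro x hx
    obtain ⟨w, hl, hw⟩ := hspec x
    exact ⟨w, by rw [Set.mem_setOf_eq, hl]; exact hx, hw⟩
  -- centralizers have finite index
  have hcent : ∀ g : G, (Subgroup.centralizer ({g} : Set G)).FiniteIndex := by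
    intro g
    set H := Subgroup.centralizer ({g} : Set G) with hH
    have hfq : Finite (G ⧸ H) := by
      let f : G ⧸ H → G := fun q =>
        Quotient.liftOn' q (fun a => a * g * a⁻¹) (by
          intro a b hab
          have hc : a⁻¹ * b ∈ H := QuotientGroup.leftRel_apply.mp hab
          rw [hH, Subgroup.mem_centralizer_iff] at hc
          have hgc : g * (a⁻¹ * b) = (a⁻¹ * b) * g := hc g (Set.mem_singleton g)
          show a * g * a⁻¹ = b * g * b⁻¹
          have hb : b = a * (a⁻¹ * b) := by group
          calc a * g * a⁻¹ = a * (g * (a⁻¹ * b)) * (a * (a⁻¹ * b))⁻¹ := by group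
            _ = a * ((a⁻¹ * b) * g) * (a * (a⁻¹ * b))⁻¹ := by rw [hgc]
            _ = b * g * b⁻¹ := by group)
      have hfℓ : ∀ q : G ⧸ H, ℓ (f q) = ℓ g := by
        intro q
        refine Quotient.inductionOn' q ?_
        intro a
        exact hconj a g
      have hinj : Function.Injective f := by
        intro q r
        refine Quotient.inductionOn₂' q r ?_
        intro a b h
        have h' : a * g * a⁻¹ = b * g * b⁻¹ := h
        apply Quotient.sound'
        rw [QuotientGroup.leftRel_apply]
        rw [hH, Subgroup.mem_centralizer_iff]
        intro x hx
        rw [Set.mem_singleton_iff] at hx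
        subst hx
        calc x * (a⁻¹ * b) = a⁻¹ * (a * x * a⁻¹) * b := by group
          _ = a⁻¹ * (b * x * b⁻¹) * b := by rw [h']
          _ = (a⁻¹ * b) * x := by group
      have hfin2 : Finite ↥{x : G | ℓ x = ℓ g} := (hfinconj g).to_subtype
      exact Finite.of_injective (fun q => (⟨f q, hfℓ q⟩ : {x : G | ℓ x = ℓ g}))
        (fun q r hqr => hinj (congrArg Subtype.val hqr))
    haveI := hfq
    exact Subgroup.finiteIndex_of_finite_quotient (H := H)
  -- the center has finite index
  have hle1 : (⨅ x : X, Subgroup.centralizer ({(x : G)} : Set G)) ≤ Subgroup.center G := by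
    intro a ha
    rw [Subgroup.mem_iInf] at ha
    rw [Subgroup.mem_center_iff]
    intro b
    have hb : b ∈ Subgroup.closure X := by rw [hgen]; trivial
    induction hb using Subgroup.closure_induction with
    | mem x hx =>
        have := Subgroup.mem_centralizer_iff.mp (ha ⟨x, hx⟩) x (Set.mem_singleton x)
        exact this
    | one => simp
    | mul x y _ _ hx hy => rw [mul_assoc, hy, ← mul_assoc, hx, mul_assoc]
    | inv x _ hx =>
        have hc : Commute x a := hx
        exact hc.inv_left
  haveI hcfin : (Subgroup.center G).FiniteIndex := by
    haveI h1 : (⨅ x : X, Subgroup.centralizer ({(x : G)} : Set G)).FiniteIndex :=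
      Subgroup.finiteIndex_iInf fun x => hcent x
    exact Subgroup.finiteIndex_of_le hle1
  -- the transfer map and commutativity
  have hcomm : ∀ a b : G, a * b = b * a := by
    have hinj : Function.Injective (MonoidHom.transferCenterPow G) := by
      rw [injective_iff_map_eq_one]
      intro g hg
      have h1 : g ^ (Subgroup.center G).index = 1 := by
        have h2 := MonoidHom.transferCenterPow_apply (G := G) g
        rw [hg] at h2
        simpa using h2.symm
      have hne : (Subgroup.center G).index ≠ 0 := hcfin.index_ne_zero
      obtain ⟨m, hm⟩ := Nat.exists_eq_succ_of_ne_zero hne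
      exact htf g m (by rw [← Nat.succ_eq_add_one, ← hm]; exact h1)
    intro a b
    apply hinj
    rw [map_mul, map_mul]
    exact Subtype.ext (Subgroup.mem_center_iff.mp (MonoidHom.transferCenterPow G b).2 _)
  -- now package everything up
  letI cg : CommGroup G := { (inferInstance : Group G) with mul_comm := hcomm }
  haveI hFG : Group.FG G := by
    constructor
    exact ⟨hfin.toFinset, by rw [hfin.coe_toFinset]; exact hgen⟩
  haveI hafg : AddGroup.FG (Additive G) := GroupFG.iff_add_fg.mp hFG
  haveI hMF : Module.Finite ℤ (Additive G) := Module.Finite.iff_addGroup_fg.mpr hafg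
  haveI hnz : NoZeroSMulDivisors ℤ (Additive G) := by
    constructor
    intro n a h
    by_cases hn : n = 0
    · exact Or.inl hn
    · right
      have h1 : (Additive.toMul a) ^ n = 1 := by
        rw [← toMul_zsmul, h]
        rfl
      have h2 : (Additive.toMul a) ^ (n.natAbs) = 1 := by
        rcases Int.natAbs_eq n with hn' | hn'
        · rw [← zpow_natCast, ← hn', h1]
        · rw [hn', zpow_neg, inv_eq_one, zpow_natCast] at h1
          exact h1
      obtain ⟨m, hm⟩ := Nat.exists_eq_succ_of_ne_zero (Int.natAbs_ne_zero.mpr hn)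
      have h3 := htf (Additive.toMul a) m (by rw [← Nat.succ_eq_add_one, ← hm]; exact h2)
      exact toMul_eq_one.mp h3
  haveI hfree : Module.Free ℤ (Additive G) := Module.free_of_finite_type_torsion_free'
  let ι := Module.Free.ChooseBasisIndex ℤ (Additive G)
  let b : Module.Basis ι ℤ (Additive G) := Module.Free.chooseBasis ℤ (Additive G)
  let n := Fintype.card ι
  let b' : Module.Basis (Fin n) ℤ (Additive G) := b.reindex (Fintype.equivFin ι)
  let e1 : Additive G ≃ₗ[ℤ] (Fin n → ℤ) := b'.equivFun
  let ea : Additive G ≃+ (Fin n → ℤ) := e1.toAddEquiv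
  let em : Multiplicative (Additive G) ≃* Multiplicative (Fin n → ℤ) := AddEquiv.toMultiplicative ea
  let e0 : G ≃* Multiplicative (Additive G) :=
    { toFun := fun g => Multiplicative.ofAdd (Additive.ofMul g)
      invFun := fun g => Additive.toMul (Multiplicative.toAdd g)
      left_inv := fun _ => rfl
      right_inv := fun _ => rfl
      map_mul' := fun _ _ => rfl }
  exact ⟨n, ⟨e0.trans em⟩⟩
end

section
/- Let G be the free abelian group with basis y₁, …, y_n (so G ≅ ℤⁿ) and let X = {y₁, y₁⁻¹, …, y_n, y_n⁻¹}. Then a word w over X is geodesic if and only if there exist signs ε₁, …, ε_n ∈ {1, −1} such that every letter occurring in w lies in {y₁^{ε₁}, …, y_n^{ε_n}}. Consequently Geo(G,X) is 1-locally testable. -/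
/-- The free abelian group of rank `n`, written multiplicatively. -/
abbrev FreeAb (n : ℕ) := Multiplicative (Fin n → ℤ)

/-- The standard basis elements `y₁, …, y_n` of the free abelian group of rank `n`. -/
abbrev yGen (n : ℕ) (i : Fin n) : FreeAb n := Multiplicative.ofAdd (Pi.single i 1)

/-- The symmetric generating set `X = {y₁, y₁⁻¹, …, y_n, y_n⁻¹}`. -/
def XFreeAb (n : ℕ) : Set (FreeAb n) :=
  {g | ∃ i : Fin n, g = yGen n i ∨ g = (yGen n i)⁻¹}

namespace Stmt2Aux

variable {n : ℕ}

lemma wordProd_nil : wordProd ([] : List (XFreeAb n)) = 1 := rfl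

lemma wordProd_cons (x : XFreeAb n) (w : List (XFreeAb n)) :
    wordProd (x :: w) = (x : FreeAb n) * wordProd w := by
  simp [wordProd]

lemma letter_toAdd (x : XFreeAb n) :
    ∃ i : Fin n, ∃ e : ℤ, (e = 1 ∨ e = -1) ∧
      Multiplicative.toAdd (x : FreeAb n) = Pi.single i e := by
  obtain ⟨i, h | h⟩ := x.2
  · exact ⟨i, 1, Or.inl rfl, by rw [h]; rfl⟩
  · refine ⟨i, -1, Or.inr rfl, ?_⟩
    rw [h]
    ext j
    by_cases hj : j = i <;> simp [Pi.single_apply, hj]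

lemma lower_bound (v : List (XFreeAb n)) :
    ∑ i, (Multiplicative.toAdd (wordProd v) i).natAbs ≤ v.length := by
  induction v with
  | nil => simp [wordProd_nil]
  | cons x v ih =>
    obtain ⟨i, e, he, hx⟩ := letter_toAdd x
    have h1 : ∀ j, Multiplicative.toAdd (wordProd (x :: v)) j
        = (Pi.single i e : Fin n → ℤ) j + Multiplicative.toAdd (wordProd v) j := by
      intro j; rw [wordProd_cons]; simp [← hx]
    have hsingle : ∑ j, ((Pi.single i e : Fin n → ℤ) j : ℤ).natAbs = 1 := by
      rw [Finset.sum_eq_single i]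
      · rcases he with h | h <;> simp [h]
      · intro b _ hb; simp [Pi.single_eq_of_ne hb]
      · simp
    calc ∑ j, (Multiplicative.toAdd (wordProd (x :: v)) j).natAbs
        ≤ ∑ j, (((Pi.single i e : Fin n → ℤ) j : ℤ).natAbs
            + (Multiplicative.toAdd (wordProd v) j).natAbs) := by
          refine Finset.sum_le_sum fun j _ => ?_
          rw [h1 j]; exact Int.natAbs_add_le _ _
      _ = 1 + ∑ j, (Multiplicative.toAdd (wordProd v) j).natAbs := by
          rw [Finset.sum_add_distrib, hsingle]
      _ ≤ 1 + v.length := by omega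
      _ = (x :: v).length := by simp [Nat.add_comm]

lemma eps_word (ε : Fin n → ℤ) (hε : ∀ i, ε i = 1 ∨ ε i = -1)
    (w : List (XFreeAb n)) (hw : ∀ x ∈ w, ∃ i, (x : FreeAb n) = yGen n i ^ ε i) :
    ∃ c : Fin n → ℕ, (∀ i, Multiplicative.toAdd (wordProd w) i = ε i * c i)
      ∧ ∑ i, c i = w.length := by
  induction w with
  | nil => exact ⟨0, by simp [wordProd_nil], by simp⟩
  | cons x w ih =>
    obtain ⟨c, hc, hsum⟩ := ih (fun y hy => hw y (List.mem_cons_of_mem _ hy))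
    obtain ⟨i, hxi⟩ := hw x List.mem_cons_self
    refine ⟨c + Pi.single i 1, ?_, ?_⟩
    · intro j
      have hx : Multiplicative.toAdd (x : FreeAb n) j
          = if j = i then ε i else 0 := by
        rw [hxi]
        simp [toAdd_zpow, Pi.single_apply]
      rw [wordProd_cons]
      simp only [toAdd_mul, Pi.add_apply, hx, hc j, Pi.add_apply,
        Pi.single_apply]
      by_cases hj : j = i
      · subst hj; simp; ring
      · simp [hj]
    · simp [Finset.sum_add_distrib, hsum, Pi.single_apply, Nat.add_comm]

lemma singleton_infix_iff {A : Type*} (a : A) (l : List A) :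
    [a] <:+: l ↔ a ∈ l := by
  constructor
  · intro h; exact h.subset (List.mem_singleton_self a)
  · intro h
    obtain ⟨s, t, rfl⟩ := List.append_of_mem h
    exact ⟨s, t, by simp⟩

end Stmt2Aux

/-- In the free abelian group with basis `y₁, …, y_n` and generating set
`X = {y_i^{±1}}`, a word is geodesic iff all its letters lie in
`{y₁^{ε₁}, …, y_n^{ε_n}}` for some choice of signs `ε_i ∈ {1, -1}`.
Consequently `Geo(G,X)` is 1-locally testable. -/
theorem stmt2 (n : ℕ) :
    (∀ w : List (XFreeAb n), IsGeodesic (XFreeAb n) w ↔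
      ∃ ε : Fin n → ℤ, (∀ i, ε i = 1 ∨ ε i = -1) ∧
        ∀ x ∈ w, ∃ i : Fin n, (x : FreeAb n) = yGen n i ^ ε i) ∧
    LocallyTestable 1 (Geo (XFreeAb n)) := by
  classical
  have main : ∀ w : List (XFreeAb n), IsGeodesic (XFreeAb n) w ↔
      ∃ ε : Fin n → ℤ, (∀ i, ε i = 1 ∨ ε i = -1) ∧
        ∀ x ∈ w, ∃ i : Fin n, (x : FreeAb n) = yGen n i ^ ε i := by
    intro w
    constructor
    · intro hgeo
      refine ⟨fun i => if (⟨(yGen n i)⁻¹, ⟨i, Or.inr rfl⟩⟩ : XFreeAb n) ∈ w then -1 else 1,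
        fun i => by dsimp only; split <;> simp, ?_⟩
      intro x hx
      obtain ⟨i, hxi | hxi⟩ := x.2
      · refine ⟨i, ?_⟩
        have hninv : (⟨(yGen n i)⁻¹, ⟨i, Or.inr rfl⟩⟩ : XFreeAb n) ∉ w := by
          intro hinv
          set a : XFreeAb n := ⟨yGen n i, ⟨i, Or.inl rfl⟩⟩ with ha
          set b : XFreeAb n := ⟨(yGen n i)⁻¹, ⟨i, Or.inr rfl⟩⟩ with hb
          have hba : b ≠ a := by
            intro h
            have h2 := congrArg (fun z : XFreeAb n => Multiplicative.toAdd (z : FreeAb n) i) h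
            simp [ha, hb] at h2
          have haw : a ∈ w := by
            have hxa : x = a := Subtype.ext hxi
            rwa [hxa] at hx
          have h1 : w.Perm (a :: w.erase a) := List.perm_cons_erase haw
          have hbw : b ∈ w.erase a := (List.mem_erase_of_ne hba).mpr hinv
          have h2 : (w.erase a).Perm (b :: (w.erase a).erase b) :=
            List.perm_cons_erase hbw
          have hperm : w.Perm (a :: b :: (w.erase a).erase b) :=
            h1.trans (h2.cons a)
          have hprod : wordProd w = wordProd (a :: b :: (w.erase a).erase b) :=
            List.Perm.prod_eq (hperm.map Subtype.val)
          have hpr : wordProd ((w.erase a).erase b) = wordProd w := by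
            rw [hprod, Stmt2Aux.wordProd_cons, Stmt2Aux.wordProd_cons]
            simp [ha, hb]
          have hle := hgeo _ hpr
          have hlen := hperm.length_eq
          simp at hlen
          omega
        simp only [hninv, if_false, if_neg hninv]
        rw [zpow_one, hxi]
      · refine ⟨i, ?_⟩
        have hbw : (⟨(yGen n i)⁻¹, ⟨i, Or.inr rfl⟩⟩ : XFreeAb n) ∈ w := by
          have hxb : x = (⟨(yGen n i)⁻¹, ⟨i, Or.inr rfl⟩⟩ : XFreeAb n) :=
            Subtype.ext hxi
          rwa [hxb] at hx
        simp only [if_pos hbw]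
        rw [hxi, zpow_neg, zpow_one]
    · rintro ⟨ε, hε, hw⟩ v hv
      obtain ⟨c, hc, hsum⟩ := Stmt2Aux.eps_word ε hε w hw
      have hlen : w.length = ∑ i, (Multiplicative.toAdd (wordProd w) i).natAbs := by
        rw [← hsum]
        refine Finset.sum_congr rfl fun i _ => ?_
        rw [hc i]
        rcases hε i with h | h <;> simp [h]
      calc w.length = ∑ i, (Multiplicative.toAdd (wordProd v) i).natAbs := by
            rw [hlen, hv]
        _ ≤ v.length := Stmt2Aux.lower_bound v
  refine ⟨main, ?_⟩
  rintro u v ⟨-, -, hsub⟩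
  have hmem : ∀ x, x ∈ u ↔ x ∈ v := fun x => by
    rw [← Stmt2Aux.singleton_infix_iff, ← Stmt2Aux.singleton_infix_iff]
    exact hsub [x] rfl
  simp only [Geo, Set.mem_setOf_eq, main u, main v]
  constructor
  · rintro ⟨ε, hε, h⟩
    exact ⟨ε, hε, fun x hx => h x ((hmem x).mpr hx)⟩
  · rintro ⟨ε, hε, h⟩
    exact ⟨ε, hε, fun x hx => h x ((hmem x).mp hx)⟩
end

section
/- A language L over a finite alphabet X is 1-locally testable if and only if its syntactic semigroup is idempotent and commutative, i.e. if and only if w ∼_L w² for every nonempty word w over X and uv ∼_L vu for all nonempty words u, v over X. -/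
namespace Aux3
variable {A : Type*} {L : Set (List A)}

lemma sc_refl (u : List A) : SynCong L u u := fun _ _ => Iff.rfl
lemma sc_symm {u v : List A} (h : SynCong L u v) : SynCong L v u := fun s t => (h s t).symm
lemma sc_trans {u v w : List A} (h1 : SynCong L u v) (h2 : SynCong L v w) : SynCong L u w :=
  fun s t => (h1 s t).trans (h2 s t)

lemma sc_append_left (x : List A) {u v : List A} (h : SynCong L u v) :
    SynCong L (x ++ u) (x ++ v) := fun s t => by
  simpa [List.append_assoc] using h (s ++ x) t

lemma sc_append_right (y : List A) {u v : List A} (h : SynCong L u v) :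
    SynCong L (u ++ y) (v ++ y) := fun s t => by
  simpa [List.append_assoc] using h s (y ++ t)

lemma infix_singleton {a : A} {u : List A} : [a] <:+: u ↔ a ∈ u := by
  constructor
  · intro h; exact h.subset (by simp)
  · intro h
    obtain ⟨p, q, rfl⟩ := List.append_of_mem h
    exact ⟨p, q, by simp⟩

lemma simK_one {u v : List A} (h : ∀ a, a ∈ u ↔ a ∈ v) : SimK 1 u v := by
  refine ⟨by simp, by simp, ?_⟩
  intro s hs
  match s, hs with
  | [a], _ => rw [infix_singleton, infix_singleton]; exact h a

lemma simK_one_mem {u v : List A} (h : SimK 1 u v) (a : A) : a ∈ u ↔ a ∈ v := by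
  rw [← infix_singleton, ← infix_singleton]
  exact h.2.2 [a] rfl

lemma absorb_one (hid : ∀ w : List A, w ≠ [] → SynCong L w (w ++ w))
    (hcm : ∀ u v : List A, u ≠ [] → v ≠ [] → SynCong L (u ++ v) (v ++ u))
    {u : List A} {a : A} (ha : a ∈ u) : SynCong L u (u ++ [a]) := by
  obtain ⟨p, q, rfl⟩ := List.append_of_mem ha
  have hidem : SynCong L ([a] ++ [a] : List A) [a] := sc_symm (hid [a] (by simp))
  rcases eq_or_ne q [] with rfl | hq
  · have h := sc_append_left p hidem
    have e1 : (p ++ [a]) ++ [a] = p ++ ([a] ++ [a]) := by simp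
    have e2 : p ++ a :: ([] : List A) = p ++ [a] := by simp
    rw [e2, e1]
    exact sc_symm h
  · have h2 : SynCong L (q ++ [a]) ([a] ++ q) := hcm q [a] hq (by simp)
    have h3 := sc_append_left (p ++ [a]) h2
    have h5 := sc_append_right q hidem
    have h6 := sc_append_left p h5
    have e1 : (p ++ a :: q) ++ [a] = (p ++ [a]) ++ (q ++ [a]) := by simp
    have e2 : (p ++ [a]) ++ ([a] ++ q) = p ++ (([a] ++ [a]) ++ q) := by simp
    have e3 : p ++ ([a] ++ q) = p ++ a :: q := by simp
    refine sc_symm ?_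
    rw [e1]
    refine sc_trans h3 ?_
    rw [e2]
    refine sc_trans h6 ?_
    rw [e3]
    exact sc_refl _

lemma absorb_list (hid : ∀ w : List A, w ≠ [] → SynCong L w (w ++ w))
    (hcm : ∀ u v : List A, u ≠ [] → v ≠ [] → SynCong L (u ++ v) (v ++ u))
    {u v : List A} (hv : ∀ a ∈ v, a ∈ u) : SynCong L u (u ++ v) := by
  induction v with
  | nil => simpa using sc_refl u
  | cons a v ih =>
    have h1 : SynCong L u (u ++ [a]) := absorb_one hid hcm (hv a (by simp))
    have ih' : SynCong L u (u ++ v) := ih (fun b hb => hv b (by simp [hb]))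
    have h2 := sc_append_right v h1
    have h := sc_trans ih' h2
    have e : (u ++ [a]) ++ v = u ++ a :: v := by simp
    rwa [e] at h

lemma same_letters (hid : ∀ w : List A, w ≠ [] → SynCong L w (w ++ w))
    (hcm : ∀ u v : List A, u ≠ [] → v ≠ [] → SynCong L (u ++ v) (v ++ u))
    {u v : List A} (h : ∀ a, a ∈ u ↔ a ∈ v) : SynCong L u v := by
  rcases eq_or_ne u [] with rfl | hu
  · have : v = [] := by
      rw [List.eq_nil_iff_forall_not_mem]
      intro a ha; simpa using (h a).2 ha
    rw [this]; exact sc_refl _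
  · have hv : v ≠ [] := by
      rintro rfl
      exact hu (List.eq_nil_iff_forall_not_mem.2 fun a ha => by simpa using (h a).1 ha)
    have hU : SynCong L u (u ++ v) := absorb_list hid hcm (fun a ha => (h a).2 ha)
    have hV : SynCong L v (v ++ u) := absorb_list hid hcm (fun a ha => (h a).1 ha)
    exact sc_trans hU (sc_trans (hcm u v hu hv) (sc_symm hV))

end Aux3

/-- A language over a finite alphabet is 1-locally testable iff its syntactic semigroup
is idempotent (`w ∼_L w²` for all nonempty `w`) and commutative (`uv ∼_L vu` for all
nonempty `u, v`). -/
theorem stmt3 {A : Type*} [Fintype A] (L : Set (List A)) :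
    LocallyTestable 1 L ↔
      ((∀ w : List A, w ≠ [] → SynCong L w (w ++ w)) ∧
       (∀ u v : List A, u ≠ [] → v ≠ [] → SynCong L (u ++ v) (v ++ u))) := by
  constructor
  · intro hL
    constructor
    · intro w _ s t
      apply hL
      apply Aux3.simK_one
      intro a; simp only [List.mem_append]; tauto
    · intro u v _ _ s t
      apply hL
      apply Aux3.simK_one
      intro a; simp only [List.mem_append]; tauto
  · rintro ⟨hid, hcm⟩ u v h
    have hc : SynCong L u v :=
      Aux3.same_letters hid hcm (Aux3.simK_one_mem h)
    simpa using hc [] []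
end

section
/- If G is a locally testable group (i.e. Geo(G,X) is k-locally testable for some finite symmetric generating set X of G and some k ≥ 1), then G has only finitely many conjugacy classes of elements of finite order. -/
set_option linter.unusedSectionVars false
namespace Stmt8Helpers

variable {G : Type*} [Group G] {X : Set G}

theorem wordProd_nil : wordProd ([] : List X) = 1 := rfl

theorem wordProd_cons (a : X) (l : List X) :
    wordProd (a :: l) = (a : G) * wordProd l := by
  simp [wordProd]

theorem wordProd_append (u v : List X) :
    wordProd (u ++ v) = wordProd u * wordProd v := by
  simp [wordProd]

theorem wordProd_singleton (a : X) : wordProd [a] = (a : G) := by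
  simp [wordProd]

theorem conj_pow' (c g : G) (n : ℕ) : (c * g * c⁻¹) ^ n = c * g ^ n * c⁻¹ := by
  induction n with
  | zero => simp
  | succ d ih => rw [pow_succ, pow_succ, ih]; group

theorem wordProd_revmap (hsym : ∀ x ∈ X, x⁻¹ ∈ X) (u : List X) :
    wordProd ((u.map (fun (a : X) => (⟨(a.1)⁻¹, hsym a.1 a.2⟩ : X))).reverse)
      = (wordProd u)⁻¹ := by
  induction u with
  | nil => simp [wordProd]
  | cons a t ih =>
      simp only [List.map_cons, List.reverse_cons]
      rw [wordProd_append, ih, wordProd_cons, wordProd_cons, wordProd_nil, mul_inv_rev]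
      simp

theorem exists_word (hsym : ∀ x ∈ X, x⁻¹ ∈ X) (hgen : Subgroup.closure X = ⊤)
    (g : G) : ∃ w : List X, wordProd w = g := by
  have hg : g ∈ Subgroup.closure X := by rw [hgen]; exact Subgroup.mem_top g
  induction hg using Subgroup.closure_induction with
  | mem x hx => exact ⟨[⟨x, hx⟩], by simp [wordProd]⟩
  | one => exact ⟨[], rfl⟩
  | mul x y hx hy ihx ihy =>
      obtain ⟨u, hu⟩ := ihx
      obtain ⟨v, hv⟩ := ihy
      exact ⟨u ++ v, by rw [wordProd_append, hu, hv]⟩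
  | inv x hx ihx =>
      obtain ⟨u, hu⟩ := ihx
      exact ⟨_, by rw [wordProd_revmap hsym u, hu]⟩


section Windows

variable (w : List X)

/-- the periodic stream of `w` -/
def strm (hw : 0 < w.length) (n : ℕ) : X :=
  w.get ⟨n % w.length, Nat.mod_lt n hw⟩

/-- window of the periodic stream starting at `i` of length `t` -/
def win (hw : 0 < w.length) (i t : ℕ) : List X :=
  (List.range t).map (fun r => strm w hw (i + r))

variable (hw : 0 < w.length)

theorem strm_congr {a b : ℕ} (h : a % w.length = b % w.length) :
    strm w hw a = strm w hw b := by
  unfold strm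
  congr 1
  exact Fin.ext h

theorem strm_add_len (n : ℕ) : strm w hw (n + w.length) = strm w hw n :=
  strm_congr w hw (by rw [Nat.add_mod_right])

theorem strm_add_mul (n c : ℕ) : strm w hw (n + w.length * c) = strm w hw n :=
  strm_congr w hw (by rw [Nat.add_mul_mod_self_left])

@[simp] theorem win_length (i t : ℕ) : (win w hw i t).length = t := by
  simp [win]

theorem win_append (i a b : ℕ) :
    win w hw i (a + b) = win w hw i a ++ win w hw (i + a) b := by
  unfold win
  rw [List.range_add, List.map_append, List.map_map]
  congr 1
  apply List.map_congr_left
  intro r _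
  simp only [Function.comp]
  congr 1
  omega

theorem win_periodic (i t c : ℕ) :
    win w hw (i + w.length * c) t = win w hw i t := by
  unfold win
  apply List.map_congr_left
  intro r _
  have h1 : i + w.length * c + r = (i + r) + w.length * c := by omega
  rw [h1, strm_add_mul]

theorem win_mod {a b : ℕ} (t : ℕ) (h : a % w.length = b % w.length) :
    win w hw a t = win w hw b t := by
  unfold win
  apply List.map_congr_left
  intro r _
  exact strm_congr w hw (Nat.ModEq.add_right r h)

theorem win_take {a b : ℕ} (i : ℕ) (h : a ≤ b) :
    (win w hw i b).take a = win w hw i a := by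
  have hb : b = a + (b - a) := by omega
  rw [hb, win_append]
  exact List.take_left' (win_length w hw i a)

theorem win_drop {a b : ℕ} (i : ℕ) (h : a ≤ b) :
    (win w hw i b).drop a = win w hw (i + a) (b - a) := by
  have hb : b = a + (b - a) := by omega
  have h2 : a + (b - a) - a = b - a := by omega
  rw [hb, win_append, h2]
  exact List.drop_left' (win_length w hw i a)

theorem win_self : win w hw 0 w.length = w := by
  apply List.ext_getElem (by simp)
  intro n h1 h2
  simp only [win, strm, List.getElem_map, List.getElem_range, List.get_eq_getElem]
  congr 1
  rw [Nat.zero_add]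
  exact Nat.mod_eq_of_lt h2

theorem win_one (i : ℕ) : win w hw i 1 = [strm w hw i] := by
  have : List.range 1 = [0] := rfl
  simp [win, this]


theorem win_split_one (i t : ℕ) (ht : 0 < t) :
    win w hw i t = win w hw i 1 ++ win w hw (i + 1) (t - 1) := by
  have h : t = 1 + (t - 1) := by omega
  rw [h, win_append]
  have h2 : 1 + (t - 1) - 1 = t - 1 := by omega
  rw [h2]

theorem win_split_last (i t : ℕ) (ht : 0 < t) :
    win w hw i t = win w hw i (t - 1) ++ win w hw (i + (t - 1)) 1 := by
  have h : t = (t - 1) + 1 := by omega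
  conv_lhs => rw [h]
  rw [win_append]

theorem win_rot (i : ℕ) :
    wordProd (win w hw (i + 1) w.length)
      = (strm w hw i : G)⁻¹ * wordProd (win w hw i w.length) * (strm w hw i) := by
  have e1 : win w hw i w.length = win w hw i 1 ++ win w hw (i + 1) (w.length - 1) :=
    win_split_one w hw i w.length hw
  have e2 : win w hw (i + 1) w.length
      = win w hw (i + 1) (w.length - 1) ++ win w hw (i + w.length) 1 := by
    rw [win_split_last w hw (i+1) w.length hw]
    congr 2
    omega
  have e3 : win w hw (i + w.length) 1 = [strm w hw i] := by
    rw [win_one, strm_add_len]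
  rw [e2, e3, wordProd_append, wordProd_singleton, e1, wordProd_append, win_one,
    wordProd_singleton]
  group

theorem win_conj (i : ℕ) :
    IsConj (wordProd (win w hw 0 w.length)) (wordProd (win w hw i w.length)) := by
  induction i with
  | zero => exact IsConj.refl _
  | succ n ih =>
      refine ih.trans ?_
      rw [isConj_iff]
      refine ⟨(strm w hw n : G)⁻¹, ?_⟩
      rw [win_rot w hw n]
      group

theorem win_pow (i c : ℕ) :
    wordProd (win w hw i (w.length * c)) = (wordProd (win w hw i w.length)) ^ c := by
  induction c with
  | zero => simp [win, wordProd]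
  | succ n ih =>
      have h1 : w.length * (n + 1) = w.length + w.length * n := by ring
      have h2 : win w hw (i + w.length) (w.length * n) = win w hw i (w.length * n) := by
        have h3 : i + w.length = i + w.length * 1 := by ring
        rw [h3, win_periodic]
      rw [h1, win_append, wordProd_append, h2, ih, pow_succ']

theorem win_eq_of_ext {a b : ℕ} (t : ℕ)
    (hext : ∀ r, r < t → strm w hw (a + r) = strm w hw (b + r)) :
    win w hw a t = win w hw b t := by
  unfold win
  apply List.map_congr_left
  intro r hr
  exact hext r (List.mem_range.mp hr)

theorem win_infix_decomp {s : List X} {i b : ℕ} (hs : s <:+: win w hw i b) :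
    ∃ j, j + s.length ≤ b ∧ s = win w hw (i + j) s.length := by
  obtain ⟨p, q, hpq⟩ := hs
  have hlen : p.length + (s.length + q.length) = b := by
    have h0 := congrArg List.length hpq
    simp only [List.length_append, win_length] at h0
    omega
  refine ⟨p.length, by omega, ?_⟩
  have h1 : (win w hw i b).drop p.length = s ++ q := by
    rw [← hpq, List.append_assoc]
    exact List.drop_left
  have h2 : (win w hw i b).drop p.length = win w hw (i + p.length) (b - p.length) :=
    win_drop w hw i (by omega)
  calc s = (s ++ q).take s.length := List.take_left.symm
    _ = ((win w hw i b).drop p.length).take s.length := by rw [h1]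
    _ = (win w hw (i + p.length) (b - p.length)).take s.length := by rw [h2]
    _ = win w hw (i + p.length) s.length := win_take w hw _ (by omega)

theorem win_infix_of {i j t b : ℕ} (h : j + t ≤ b) :
    win w hw (i + j) t <:+: win w hw i b := by
  refine ⟨win w hw i j, win w hw (i + (j + t)) (b - (j + t)), ?_⟩
  rw [← win_append, ← win_append]
  congr 1
  omega

end Windows


theorem main_bound [Fintype ↥X] {k : ℕ} (hk : 1 ≤ k)
    (hlt : LocallyTestable k (Geo X))
    {h : G} {m : ℕ} (hm : 0 < m) (hhm : h ^ m = 1)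
    {w : List X} (hwp : wordProd w = h)
    (hmin : ∀ h' : G, IsConj h h' → ∀ v : List X, wordProd v = h' → w.length ≤ v.length) :
    w.length ≤ (k - 1) * Fintype.card (Fin k → ↥X) := by
  classical
  by_contra hcon
  push_neg at hcon
  set ℓ := w.length with hldef
  set N := Fintype.card (Fin k → ↥X) with hNdef
  have hl : 0 < ℓ := Nat.lt_of_le_of_lt (Nat.zero_le _) hcon
  haveI : Nonempty ↥X := ⟨w.get ⟨0, hl⟩⟩
  have hN1 : 1 ≤ N := Fintype.card_pos
  have hkl : k ≤ ℓ := by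
    have h2 : k - 1 ≤ (k - 1) * N := Nat.le_mul_of_pos_right _ hN1
    have h3 : k - 1 < ℓ := lt_of_le_of_lt h2 hcon
    omega
  -- conjugacy facts about rotations
  have hconjw : ∀ i, IsConj h (wordProd (win w hl i ℓ)) := by
    intro i
    have h0 := win_conj w hl i
    rwa [win_self w hl, hwp] at h0
  have hpow1 : ∀ i, (wordProd (win w hl i ℓ)) ^ m = 1 := by
    intro i
    obtain ⟨c, hc⟩ := isConj_iff.mp (hconjw i)
    rw [← hc, conj_pow', hhm]
    group
  have hlong_prod : ∀ i, wordProd (win w hl i (ℓ + ℓ * m)) = wordProd (win w hl i ℓ) := by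
    intro i
    rw [win_append, wordProd_append]
    have e1 : win w hl (i + ℓ) (ℓ * m) = win w hl i (ℓ * m) := by
      have e0 : i + ℓ = i + ℓ * 1 := by ring
      rw [e0, win_periodic]
    rw [e1, win_pow, hpow1, mul_one]
  have halive : ∀ i, win w hl i ℓ ∈ Geo X := by
    intro i
    intro v hv
    rw [win_length]
    exact hmin _ (hconjw i) v hv
  have hM0 : 0 < ℓ * m := Nat.mul_pos hl hm
  -- no "good" starting position can exist
  have hGood : ∀ i : ℕ,
      (∀ j, j < ℓ → ℓ < j + k →
        ∃ j', j' + k ≤ ℓ ∧ win w hl (i + j') k = win w hl (i + j) k) → False := by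
    intro i hGi
    have hsim : SimK k (win w hl i ℓ) (win w hl i (ℓ + ℓ * m)) := by
      refine ⟨?_, ?_, ?_⟩
      · rw [win_take w hl i (by omega), win_take w hl i (by omega)]
      · rw [win_length, win_length, win_drop w hl i (by omega),
          win_drop w hl i (by omega)]
        have e2 : ℓ - (ℓ - (k - 1)) = k - 1 := by omega
        have e3 : ℓ + ℓ * m - (ℓ + ℓ * m - (k - 1)) = k - 1 := by omega
        rw [e2, e3]
        have e4 : i + (ℓ + ℓ * m - (k - 1)) = (i + (ℓ - (k - 1))) + ℓ * m := by omega
        rw [e4]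
        have e5 : (i + (ℓ - (k - 1))) + ℓ * m = (i + (ℓ - (k - 1))) + ℓ * m := rfl
        rw [win_periodic]
      · intro s hs
        constructor
        · intro hsu
          refine hsu.trans ⟨[], win w hl (i + ℓ) (ℓ * m), ?_⟩
          rw [List.nil_append, ← win_append]
        · intro hsv
          obtain ⟨j, hj, hsw⟩ := win_infix_decomp w hl hsv
          rw [hs] at hj hsw
          have hjmod : win w hl (i + j) k = win w hl (i + (j % ℓ)) k := by
            apply win_mod
            exact ((Nat.mod_modEq j ℓ).add_left i).symm
          have hj0 : j % ℓ < ℓ := Nat.mod_lt _ hl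
          by_cases hcase : j % ℓ + k ≤ ℓ
          · rw [hsw, hjmod]
            exact win_infix_of w hl hcase
          · obtain ⟨j', hj', hEq⟩ := hGi (j % ℓ) hj0 (by omega)
            rw [hsw, hjmod, ← hEq]
            exact win_infix_of w hl hj'
    have hvgeo : win w hl i (ℓ + ℓ * m) ∈ Geo X := (hlt _ _ hsim).mp (halive i)
    have hle : (win w hl i (ℓ + ℓ * m)).length ≤ (win w hl i ℓ).length :=
      hvgeo (win w hl i ℓ) (hlong_prod i).symm
    rw [win_length, win_length] at hle
    omega
  -- hence every starting position is "bad"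
  have hbad : ∀ i : ℕ, ∃ j, j < ℓ ∧ ℓ < j + k ∧
      ∀ j', j' + k ≤ ℓ → win w hl (i + j') k ≠ win w hl (i + j) k := by
    intro i
    by_contra hb
    push_neg at hb
    exact hGood i hb
  -- counting argument
  choose jf hjlt hjgt hjne using hbad
  set φ : ℕ → (Fin k → ↥X) := fun a r => strm w hl (a + r.val) with hφdef
  have hφ_to_win : ∀ a b : ℕ, φ a = φ b → win w hl a k = win w hl b k := by
    intro a b hab
    apply win_eq_of_ext
    intro r hr
    exact congrFun hab ⟨r, hr⟩
  have hφ_mod : ∀ a b : ℕ, a % ℓ = b % ℓ → φ a = φ b := by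
    intro a b hab
    funext r
    exact strm_congr w hl (Nat.ModEq.add_right r.val hab)
  have hρex : ∀ i : ℕ, ∃ p, φ p = φ (i + jf i) := fun i => ⟨i + jf i, rfl⟩
  set ρ : (Fin k → ↥X) → ℕ := fun v => if hv : ∃ p, φ p = v then Nat.find hv else 0
    with hρdef
  have hρ : ∀ v : Fin k → ↥X, (∃ p, φ p = v) → φ (ρ v) = v := by
    intro v hv
    simp only [hρdef, dif_pos hv]
    exact Nat.find_spec hv
  have hkey : ∀ i, i < ℓ → ∀ p : ℕ, φ p = φ (i + jf i) → ℓ - k < (p + ℓ - i) % ℓ := by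
    intro i hi p hp
    by_contra hc2
    push_neg at hc2
    have h1 : i ≤ p + ℓ := by omega
    have hu : (i + (p + ℓ - i) % ℓ) % ℓ = p % ℓ := by
      calc (i + (p + ℓ - i) % ℓ) % ℓ = (i + (p + ℓ - i)) % ℓ :=
            (Nat.mod_modEq (p + ℓ - i) ℓ).add_left i
        _ = (p + ℓ) % ℓ := by rw [Nat.add_sub_cancel' h1]
        _ = p % ℓ := Nat.add_mod_right p ℓ
    have hwin1 : win w hl (i + (p + ℓ - i) % ℓ) k = win w hl (i + jf i) k :=
      hφ_to_win _ _ ((hφ_mod _ _ hu).trans hp)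
    exact hjne i ((p + ℓ - i) % ℓ) (by omega) hwin1
  have hmaps : ∀ i ∈ Finset.range ℓ,
      (φ (i + jf i), (ρ (φ (i + jf i)) + ℓ - i) % ℓ)
        ∈ (Finset.univ : Finset (Fin k → ↥X)) ×ˢ Finset.Ioo (ℓ - k) ℓ := by
    intro i hi
    rw [Finset.mem_product]
    refine ⟨Finset.mem_univ _, Finset.mem_Ioo.mpr ⟨?_, Nat.mod_lt _ hl⟩⟩
    exact hkey i (Finset.mem_range.mp hi) (ρ (φ (i + jf i))) (hρ _ (hρex i))
  have hinj : Set.InjOn (fun i => (φ (i + jf i), (ρ (φ (i + jf i)) + ℓ - i) % ℓ))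
      (Finset.range ℓ) := by
    intro i hi i' hi' heq
    simp only [Prod.mk.injEq] at heq
    obtain ⟨hv, hu⟩ := heq
    rw [hv] at hu
    have hi1 : i < ℓ := by simpa using hi
    have hi2 : i' < ℓ := by simpa using hi'
    set R := ρ (φ (i' + jf i')) with hR
    rcases Nat.le_total (R + ℓ - i) (R + ℓ - i') with hle | hle
    · have hdvd : ℓ ∣ (R + ℓ - i') - (R + ℓ - i) := (Nat.modEq_iff_dvd' hle).mp hu
      have hz : (R + ℓ - i') - (R + ℓ - i) = 0 :=
        Nat.eq_zero_of_dvd_of_lt hdvd (by omega) |>.symm ▸ rfl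
      omega
    · have hdvd : ℓ ∣ (R + ℓ - i) - (R + ℓ - i') := (Nat.modEq_iff_dvd' hle).mp hu.symm
      have hz : (R + ℓ - i) - (R + ℓ - i') = 0 :=
        Nat.eq_zero_of_dvd_of_lt hdvd (by omega) |>.symm ▸ rfl
      omega
  have hcard := Finset.card_le_card_of_injOn _ hmaps hinj
  rw [Finset.card_range, Finset.card_product, Finset.card_univ, Nat.card_Ioo] at hcard
  have e7 : ℓ - (ℓ - k) - 1 = k - 1 := by omega
  rw [e7, Nat.mul_comm] at hcard
  exact Nat.lt_irrefl _ (Nat.lt_of_lt_of_le hcon hcard)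


theorem finite_length_le (α : Type*) [Finite α] (n : ℕ) :
    {l : List α | l.length ≤ n}.Finite := by
  induction n with
  | zero =>
      apply Set.Finite.subset (Set.finite_singleton ([] : List α))
      intro l hl
      simp only [Set.mem_setOf_eq, Nat.le_zero, List.length_eq_zero_iff] at hl
      simp [hl]
  | succ d ih =>
      apply Set.Finite.subset
        ((Set.finite_singleton ([] : List α)).union
          (Set.Finite.image2 (fun (a : α) (t : List α) => a :: t) Set.finite_univ ih))
      intro l hl
      simp only [Set.mem_setOf_eq] at hl
      cases l with
      | nil => exact Or.inl rfl
      | cons a t =>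
          refine Or.inr (Set.mem_image2.mpr ⟨a, Set.mem_univ a, t, ?_, rfl⟩)
          simp only [Set.mem_setOf_eq]
          simp only [List.length_cons] at hl
          omega

end Stmt8Helpers

/-- A locally testable group has finitely many conjugacy classes of torsion elements. -/
theorem stmt8 {G : Type*} [Group G] (X : Set G)
    (hfin : X.Finite) (hsym : ∀ x ∈ X, x⁻¹ ∈ X) (hgen : Subgroup.closure X = ⊤)
    (k : ℕ) (hk : 1 ≤ k) (hlt : LocallyTestable k (Geo X)) :
    ∃ T : Set G, T.Finite ∧ ∀ g : G, IsOfFinOrder g → ∃ t ∈ T, IsConj t g := by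
  classical
  haveI : Fintype ↥X := hfin.fintype
  have hX : ∀ g : G, ∃ v : List X, wordProd v = g := Stmt8Helpers.exists_word hsym hgen
  set B := (k - 1) * Fintype.card (Fin k → ↥X) with hB
  refine ⟨wordProd '' {v : List X | v.length ≤ B}, ?_, ?_⟩
  · exact (Stmt8Helpers.finite_length_le ↥X B).image _
  · intro g hg
    obtain ⟨n, hn, hgn⟩ := isOfFinOrder_iff_pow_eq_one.mp hg
    have hPex : ∃ c : ℕ, ∃ h' : G, ∃ v : List X,
        IsConj g h' ∧ wordProd v = h' ∧ v.length = c := by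
      obtain ⟨v, hv⟩ := hX g
      exact ⟨v.length, g, v, IsConj.refl g, hv, rfl⟩
    obtain ⟨h, wv, hconj, hwp, hwlen⟩ := Nat.find_spec hPex
    have hmin : ∀ h' : G, IsConj h h' → ∀ v : List X, wordProd v = h' →
        wv.length ≤ v.length := by
      intro h' hh' v hv
      have hle : Nat.find hPex ≤ v.length :=
        Nat.find_min' hPex ⟨h', v, hconj.trans hh', hv, rfl⟩
      omega
    have hh_pow : h ^ n = 1 := by
      obtain ⟨c, hc⟩ := isConj_iff.mp hconj
      rw [← hc, Stmt8Helpers.conj_pow', hgn]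
      group
    have hlen := Stmt8Helpers.main_bound hk hlt hn hh_pow hwp hmin
    exact ⟨h, ⟨wv, hlen, hwp⟩, hconj.symm⟩
end

section
/- Let X be a finite set, let k > 0 be a natural number, and set N = 2k(|X|^{2k} + 1). Then for every word w over X of length at least N: (a) w² ∼_k w^j for every j ≥ 2; and (b) there exists a cyclic permutation w̃ of w (that is, w = pq and w̃ = qp for some words p, q over X) such that w̃ ∼_k w̃^j for every j ≥ 1. -/
section Aux
variable {A : Type*}

lemma window_infix {s u : List A} {i : ℕ} (h : s = (u.drop i).take s.length) : s <:+: u := by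
  rw [h]
  exact (List.take_prefix _ _).isInfix.trans (List.drop_suffix i u).isInfix

lemma infix_window {s u : List A} (h : s <:+: u) :
    ∃ i, i + s.length ≤ u.length ∧ s = (u.drop i).take s.length := by
  obtain ⟨a, b, rfl⟩ := h
  refine ⟨a.length, by simp, ?_⟩
  rw [List.append_assoc, List.drop_append]
  simp [List.take_append_of_le_length]

lemma win_append_left {x y : List A} {i m : ℕ} (h : i + m ≤ x.length) :
    ((x ++ y).drop i).take m = (x.drop i).take m := by
  rw [List.drop_append, List.take_append]
  have h1 : i - x.length = 0 := by omega
  have h2 : m - (x.drop i).length = 0 := by simp; omega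
  simp [h1, h2, List.take_append_of_le_length]
  omega

lemma win_append_right {x y : List A} {i m : ℕ} (h : x.length ≤ i) :
    ((x ++ y).drop i).take m = (y.drop (i - x.length)).take m := by
  rw [List.drop_append, List.drop_eq_nil_of_le h]
  simp

lemma suf_append {x y : List A} {m : ℕ} (h : m ≤ y.length) :
    (x ++ y).drop ((x ++ y).length - m) = y.drop (y.length - m) := by
  have : (x ++ y).length - m = x.length + (y.length - m) := by simp; omega
  rw [this, List.drop_length_add_append]

lemma length_listPow (w : List A) (j : ℕ) : (listPow w j).length = j * w.length := by
  induction j with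
  | zero => simp [listPow]
  | succ j ih => simp [listPow, ih]; ring

lemma listPow_succ' (w : List A) (j : ℕ) : listPow w (j + 1) = listPow w j ++ w := by
  induction j with
  | zero => simp [listPow]
  | succ j ih =>
    show w ++ listPow w (j + 1) = (w ++ listPow w j) ++ w
    rw [ih, List.append_assoc]

lemma listPow_two (w : List A) : listPow w 2 = w ++ w := by simp [listPow]

lemma listPow_prefix (w : List A) {i j : ℕ} (h : i ≤ j) : listPow w i <+: listPow w j := by
  induction j with
  | zero => simp at h; simp [h]
  | succ j ih =>
    rcases Nat.lt_or_ge i (j + 1) with h' | h'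
    · exact (ih (by omega)).trans ⟨w, (listPow_succ' w j).symm⟩
    · have : i = j + 1 := by omega
      simp [this]

lemma simK_trans {k : ℕ} {u v x : List A} (h1 : SimK k u v) (h2 : SimK k v x) : SimK k u x :=
  ⟨h1.1.trans h2.1, h1.2.1.trans h2.2.1, fun s hs => (h1.2.2 s hs).trans (h2.2.2 s hs)⟩

lemma partA {k : ℕ} (hk : 0 < k) (w : List A) (hkw : k ≤ w.length) :
    ∀ j : ℕ, 2 ≤ j → SimK k (w ++ w) (listPow w j) := by
  have key : ∀ j, ∀ s : List A, s.length = k → s <:+: listPow w j → s <:+: w ++ w := by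
    intro j
    induction j with
    | zero =>
      intro s hs h
      simp [listPow] at h
      rw [h] at hs; simp at hs; omega
    | succ j ih =>
      intro s hs h
      rcases Nat.lt_or_ge j 2 with hj | hj
      · refine h.trans ?_
        have : listPow w (j + 1) <+: listPow w 2 := listPow_prefix w (by omega)
        rw [listPow_two] at this
        exact this.isInfix
      · obtain ⟨i, hi, hwin⟩ := infix_window h
        rw [length_listPow] at hi
        rcases le_or_gt (i + k) (j * w.length) with h2 | h2
        · apply ih s hs
          apply window_infix (i := i)
          rw [hs] at hwin ⊢
          rw [hwin, listPow_succ' w j, win_append_left (by rw [length_listPow]; omega)]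
        · have hjn : 2 * w.length ≤ j * w.length := Nat.mul_le_mul_right _ hj
          have hwi : w.length ≤ i := by omega
          apply ih s hs
          apply window_infix (i := i - w.length)
          rw [hs] at hwin ⊢
          rw [hwin]
          show ((w ++ listPow w j).drop i).take k = _
          rw [win_append_right hwi]
  intro j hj
  obtain ⟨j', rfl⟩ : ∃ j', j = j' + 2 := ⟨j - 2, by omega⟩
  refine ⟨?_, ?_, ?_⟩
  · show (w ++ w).take (k-1) = (w ++ listPow w (j' + 1)).take (k-1)
    rw [List.take_append_of_le_length (by omega), List.take_append_of_le_length (by omega)]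
  · rw [listPow_succ' w (j' + 1)]
    rw [suf_append (y := w) (by omega), suf_append (y := w) (by omega)]
  · intro s hs
    constructor
    · intro h
      refine h.trans ?_
      have := listPow_prefix w (i := 2) (j := j' + 2) (by omega)
      rw [listPow_two] at this
      exact this.isInfix
    · exact key _ s hs

lemma simK_square {k : ℕ} (hk : 0 < k) {w : List A} (hkw : k ≤ w.length)
    (hcross : ∀ s : List A, s.length = k → s <:+: w ++ w → s <:+: w) :
    SimK k w (w ++ w) := by
  refine ⟨?_, ?_, ?_⟩
  · rw [List.take_append_of_le_length (by omega)]
  · rw [suf_append (y := w) (by omega)]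
  · intro s hs
    exact ⟨fun h => h.trans (List.prefix_append w w).isInfix, hcross s hs⟩

end Aux

lemma listPow_one {A : Type*} (w : List A) : listPow w 1 = w := by
  show w ++ listPow w 0 = w
  simp [listPow]

/-- If `w` has length at least `N = 2k(|X|^{2k} + 1)`, then `w² ∼_k w^j` for all `j ≥ 2`,
and some cyclic permutation `w̃ = qp` of `w = pq` satisfies `w̃ ∼_k w̃^j` for all `j ≥ 1`. -/
theorem stmt9 {A : Type*} [Fintype A] (k : ℕ) (hk : 0 < k) (w : List A)
    (hw : 2 * k * (Fintype.card A ^ (2 * k) + 1) ≤ w.length) :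
    (∀ j : ℕ, 2 ≤ j → SimK k (w ++ w) (listPow w j)) ∧
    (∃ p q : List A, w = p ++ q ∧
      ∀ j : ℕ, 1 ≤ j → SimK k (q ++ p) (listPow (q ++ p) j)) := by
  set M := Fintype.card A ^ (2 * k) with hM
  set n := w.length with hn
  have h2kn : 2 * k ≤ n := by
    calc 2 * k = 2 * k * 1 := by ring
      _ ≤ 2 * k * (M + 1) := Nat.mul_le_mul_left _ (by omega)
      _ ≤ n := hw
  have hkn : k ≤ n := by omega
  refine ⟨fun j hj => partA hk w hkn j hj, ?_⟩
  have hkey : ∀ t : Fin (M + 1), 2 * k * (t : ℕ) + 2 * k ≤ n := by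
    intro t
    have ht : (t : ℕ) + 1 ≤ M + 1 := t.isLt
    calc 2 * k * (t : ℕ) + 2 * k = 2 * k * ((t : ℕ) + 1) := by ring
      _ ≤ 2 * k * (M + 1) := Nat.mul_le_mul_left _ ht
      _ ≤ n := hw
  -- pigeonhole: two equal blocks of length 2k
  have hblk : ∃ a b : ℕ, a + 2 * k ≤ b ∧ b + 2 * k ≤ n ∧
      (w.drop a).take (2 * k) = (w.drop b).take (2 * k) := by
    have hlen : ∀ t : Fin (M + 1), ((w.drop (2 * k * t)).take (2 * k)).length = 2 * k := by
      intro t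
      have := hkey t
      simp [List.length_take, List.length_drop]
      omega
    obtain ⟨t, t', hne, heq⟩ := Fintype.exists_ne_map_eq_of_card_lt
      (β := List.Vector A (2 * k))
      (fun t : Fin (M + 1) => ⟨(w.drop (2 * k * t)).take (2 * k), hlen t⟩)
      (by rw [card_vector, Fintype.card_fin]; omega)
    have heq' : (w.drop (2 * k * t)).take (2 * k) = (w.drop (2 * k * t')).take (2 * k) :=
      congrArg Subtype.val heq
    have hstep : ∀ u u' : Fin (M + 1), (u : ℕ) < (u' : ℕ) →
        2 * k * (u : ℕ) + 2 * k ≤ 2 * k * (u' : ℕ) := by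
      intro u u' h
      calc 2 * k * (u : ℕ) + 2 * k = 2 * k * ((u : ℕ) + 1) := by ring
        _ ≤ 2 * k * (u' : ℕ) := Nat.mul_le_mul_left _ h
    rcases Ne.lt_or_gt hne with h | h
    · exact ⟨2 * k * t, 2 * k * t', hstep t t' h, hkey t', heq'⟩
    · exact ⟨2 * k * t', 2 * k * t, hstep t' t h, hkey t, heq'.symm⟩
  obtain ⟨a, b, hab, hbn, hblkeq⟩ := hblk
  set m := a + k with hm
  have hmn : m ≤ n := by omega
  refine ⟨w.take m, w.drop m, (List.take_append_drop m w).symm, ?_⟩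
  set q := w.drop m with hq
  set p := w.take m with hp
  have hql : q.length = n - m := by simp [hq, hn]
  have hpl : p.length = m := by simp [hp]; omega
  have hwt : (q ++ p).length = n := by
    rw [List.length_append, hql, hpl]; omega
  -- shifting windows inside the equal blocks
  have blkshift : ∀ c : ℕ, c + k ≤ 2 * k →
      (w.drop (a + c)).take k = (w.drop (b + c)).take k := by
    intro c hc
    have h1 : ∀ x : ℕ, (w.drop (x + c)).take k = (((w.drop x).take (2 * k)).drop c).take k := by
      intro x
      rw [List.drop_take, List.drop_drop, List.take_take]
      congr 1
      omega
    rw [h1 a, h1 b, hblkeq]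
  have hdq : ∀ x : ℕ, m ≤ x → q.drop (x - m) = w.drop x := by
    intro x hx
    rw [hq, List.drop_drop]
    congr 1
    omega
  -- every length-k factor of (qp)(qp) is a factor of qp
  have hcross : ∀ s : List A, s.length = k → s <:+: (q ++ p) ++ (q ++ p) → s <:+: q ++ p := by
    intro s hs hinf
    obtain ⟨i, hi, hwin⟩ := infix_window hinf
    rw [hs] at hwin hi
    rw [List.length_append, hwt] at hi
    rcases le_or_gt (i + k) n with h1 | h1
    · apply window_infix (i := i)
      rw [hs, hwin, win_append_left (by rw [hwt]; omega)]
    rcases le_or_gt n i with h2 | h2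
    · apply window_infix (i := i - n)
      rw [hs, hwin, win_append_right (by rw [hwt]; omega), hwt]
    -- the crossing case : n - k < i < n
    set c := i + k - n with hc
    have hcb : c + k ≤ 2 * k := by omega
    have hiq : q.length ≤ i := by rw [hql]; omega
    have hseq : s = (w.drop (a + c)).take k := by
      rw [hwin, List.append_assoc, win_append_right hiq, hql]
      rw [show p ++ (q ++ p) = w ++ p by
        rw [← List.append_assoc, hp, hq, List.take_append_drop]]
      rw [win_append_left (by rw [← hn]; omega)]
      have : i - (n - m) = a + c := by omega
      rw [this]
    have hseq2 : s = (w.drop (b + c)).take k := by rw [hseq, blkshift c hcb]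
    have hsq : s <:+: q := by
      apply window_infix (i := b + c - m)
      rw [hs, hdq (b + c) (by omega)]
      exact hseq2
    exact hsq.trans (List.prefix_append q p).isInfix
  intro j hj
  rcases Nat.lt_or_ge j 2 with hj2 | hj2
  · have hj1 : j = 1 := by omega
    subst hj1
    rw [listPow_one]
    exact ⟨rfl, rfl, fun s hs => Iff.rfl⟩
  · exact simK_trans (simK_square hk (by rw [hwt]; exact hkn) hcross)
      (partA hk (q ++ p) (by rw [hwt]; exact hkn) j hj2)
end

section
/- Let G be a group with finite symmetric generating set X. If the set Geo(G,X) of geodesic words is recursive (membership is decidable) and the set of words over X that represent the identity of G is recursively enumerable, then the set of words over X representing the identity of G is recursive; that is, G has solvable word problem. -/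
open Nat.Partrec (Code)
open Nat.Partrec.Code

/-- RE predicates are closed under existential quantification over a primcodable type. -/
theorem myRePred_exists {α β : Type} [Primcodable α] [Primcodable β] {p : α × β → Prop}
    (h : REPred p) : REPred fun a : α => ∃ b, p (a, b) := by
  obtain ⟨c, hc⟩ := exists_code.1 h
  have key : ∀ (a : α) (e : ℕ),
      (eval c (Nat.pair (Encodable.encode a) e)).Dom ↔
        ∃ b : β, Encodable.decode e = some b ∧ p (a, b) := by
    intro a e
    rw [hc]
    constructor
    · intro hd
      rw [Part.dom_iff_mem] at hd
      obtain ⟨y, hy⟩ := hd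
      simp only [Part.mem_bind_iff, Part.mem_coe, Encodable.decode_prod_val,
        Nat.unpair_pair, Encodable.encodek, Option.mem_def, Option.bind_eq_some_iff,
        Option.map_eq_some_iff, Part.mem_map_iff, Part.mem_assert_iff, Part.mem_some_iff] at hy
      obtain ⟨x, ⟨a', ha', b, hb, rfl⟩, u, ⟨hpx, -⟩, -⟩ := hy
      cases Option.some_inj.1 ha'
      exact ⟨b, hb, hpx⟩
    · rintro ⟨b, hb, hpb⟩
      rw [Part.dom_iff_mem]
      refine ⟨Encodable.encode (), ?_⟩
      simp only [Part.mem_bind_iff, Part.mem_coe, Encodable.decode_prod_val,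
        Nat.unpair_pair, Encodable.encodek, Option.mem_def, Option.bind_eq_some_iff,
        Option.map_eq_some_iff, Part.mem_map_iff, Part.mem_assert_iff, Part.mem_some_iff]
      exact ⟨(a, b), ⟨a, rfl, b, hb, rfl⟩, (), ⟨hpb, trivial⟩, trivial⟩
  have hf : Computable₂ fun (a : α) (n : ℕ) =>
      (evaln n.unpair.1 c (Nat.pair (Encodable.encode a) n.unpair.2)).map fun _ => () := by
    have hev : Primrec fun x : α × ℕ =>
        evaln x.2.unpair.1 c (Nat.pair (Encodable.encode x.1) x.2.unpair.2) :=
      primrec_evaln.comp <|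
        ((Primrec.fst.comp (Primrec.unpair.comp Primrec.snd)).pair (Primrec.const c)).pair
          (Primrec₂.natPair.comp (Primrec.encode.comp Primrec.fst)
            (Primrec.snd.comp (Primrec.unpair.comp Primrec.snd)))
    exact (Primrec.option_map hev (Primrec.const ()).to₂).to_comp
  have := (Partrec.rfindOpt hf).dom_re
  refine this.of_eq fun a => ?_
  rw [Nat.rfindOpt_dom]
  constructor
  · rintro ⟨n, u, hu⟩
    simp only [Option.mem_def, Option.map_eq_some_iff] at hu
    obtain ⟨x, hx, -⟩ := hu
    have hd : (eval c (Nat.pair (Encodable.encode a) n.unpair.2)).Dom := by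
      rw [Part.dom_iff_mem]
      exact ⟨x, evaln_complete.2 ⟨n.unpair.1, hx⟩⟩
    obtain ⟨b, -, hpb⟩ := (key a n.unpair.2).1 hd
    exact ⟨b, hpb⟩
  · rintro ⟨b, hb⟩
    have hd : (eval c (Nat.pair (Encodable.encode a) (Encodable.encode b))).Dom :=
      (key a (Encodable.encode b)).2 ⟨b, Encodable.encodek b, hb⟩
    rw [Part.dom_iff_mem] at hd
    obtain ⟨x, hx⟩ := hd
    obtain ⟨k, hk⟩ := evaln_complete.1 hx
    exact ⟨Nat.pair k (Encodable.encode b), (), by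
      simp only [Option.mem_def, Option.map_eq_some_iff, Nat.unpair_pair]
      exact ⟨x, hk, trivial⟩⟩

/-- RE predicates are closed under conjunction with a computable predicate. -/
theorem myRePred_and {α : Type} [Primcodable α] {c r : α → Prop}
    (hc : ComputablePred c) (hr : REPred r) : REPred fun a => c a ∧ r a := by
  obtain ⟨f, hf, rfl⟩ := ComputablePred.computable_iff.1 hc
  refine (Partrec.cond hf hr Partrec.none).of_eq fun a => Part.ext fun u => ?_
  cases hfa : f a <;> simp [hfa, Part.mem_assert_iff, Part.notMem_none]

/-- Computable predicates are closed under conjunction. -/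
theorem myCompPred_and {α : Type} [Primcodable α] {p q : α → Prop}
    (hp : ComputablePred p) (hq : ComputablePred q) : ComputablePred fun a => p a ∧ q a := by
  obtain ⟨f, hf, rfl⟩ := ComputablePred.computable_iff.1 hp
  obtain ⟨g, hg, rfl⟩ := ComputablePred.computable_iff.1 hq
  refine ComputablePred.computable_iff.2 ⟨fun a => f a && g a, ?_, ?_⟩
  · exact (hf.cond hg (Computable.const false)).of_eq fun a => by cases hfa : f a <;> simp [hfa]
  · funext a; simp [Bool.and_eq_true]

/-- Computable predicates are closed under composition with a computable map. -/
theorem myCompPred_comp {α β : Type} [Primcodable α] [Primcodable β] {p : β → Prop}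
    (hp : ComputablePred p) {g : α → β} (hg : Computable g) :
    ComputablePred fun a => p (g a) := by
  obtain ⟨f, hf, rfl⟩ := ComputablePred.computable_iff.1 hp
  exact ComputablePred.computable_iff.2 ⟨fun a => f (g a), hf.comp hg, rfl⟩

/-- RE predicates are closed under composition with a computable map. -/
theorem myRePred_comp {α β : Type} [Primcodable α] [Primcodable β] {p : β → Prop}
    (hp : REPred p) {g : α → β} (hg : Computable g) :
    REPred fun a => p (g a) :=
  Partrec.comp hp hg

/-- If the set of geodesic words of a group `G` (with letters indexed by the effectively
encodable alphabet `Fin m`, mapping onto a symmetric generating set via `π`) is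
recursive, and the set of words representing the identity is recursively enumerable,
then the set of words representing the identity is recursive: `G` has solvable word
problem. -/
theorem stmt11 {G : Type*} [Group G] (m : ℕ) (π : Fin m → G)
    (hsym : ∀ i : Fin m, ∃ j : Fin m, π j = (π i)⁻¹)
    (hgen : Subgroup.closure (Set.range π) = ⊤)
    (hgeo : ComputablePred fun w : List (Fin m) =>
      ∀ v : List (Fin m), (v.map π).prod = (w.map π).prod → w.length ≤ v.length)
    (hre : REPred fun w : List (Fin m) => (w.map π).prod = 1) :
    ComputablePred fun w : List (Fin m) => (w.map π).prod = 1 := by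
  classical
  choose σ hσ using hsym
  set invw : List (Fin m) → List (Fin m) := fun v => (v.map σ).reverse with hinvw
  have hinv_prod : ∀ v : List (Fin m), ((invw v).map π).prod = ((v.map π).prod)⁻¹ := by
    intro v
    rw [List.prod_inv_reverse]
    simp [invw, List.map_reverse, List.map_map, Function.comp_def, hσ]
  have exists_word : ∀ g : G, ∃ u : List (Fin m), (u.map π).prod = g := by
    intro g
    have hg : g ∈ Subgroup.closure (Set.range π) := hgen ▸ Subgroup.mem_top g
    induction hg using Subgroup.closure_induction with
    | mem x hx => obtain ⟨i, rfl⟩ := hx; exact ⟨[i], by simp⟩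
    | one => exact ⟨[], by simp⟩
    | mul x y _ _ hx hy =>
      obtain ⟨u, hu⟩ := hx; obtain ⟨v, hv⟩ := hy
      exact ⟨u ++ v, by simp [hu, hv]⟩
    | inv x _ hx =>
      obtain ⟨u, hu⟩ := hx
      exact ⟨invw u, by rw [hinv_prod, hu]⟩
  have exists_geo : ∀ g : G, ∃ v : List (Fin m),
      (v.map π).prod = g ∧
      ∀ v' : List (Fin m), (v'.map π).prod = (v.map π).prod → v.length ≤ v'.length := by
    intro g
    have hP : ∃ n : ℕ, ∃ u : List (Fin m), u.length = n ∧ (u.map π).prod = g := by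
      obtain ⟨u, hu⟩ := exists_word g
      exact ⟨u.length, u, rfl, hu⟩
    obtain ⟨v, hvl, hvp⟩ := Nat.find_spec hP
    refine ⟨v, hvp, fun v' hv' => ?_⟩
    rw [hvl]
    exact Nat.find_min' hP ⟨v', rfl, hv'.trans hvp⟩
  have compl_iff : ∀ w : List (Fin m),
      (¬ (w.map π).prod = 1) ↔ ∃ v : List (Fin m),
        ((∀ v' : List (Fin m), (v'.map π).prod = (v.map π).prod → v.length ≤ v'.length) ∧
          v ≠ []) ∧ ((w ++ invw v).map π).prod = 1 := by
    intro w
    constructor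
    · intro hne
      obtain ⟨v, hvp, hvgeo⟩ := exists_geo ((w.map π).prod)
      refine ⟨v, ⟨hvgeo, ?_⟩, ?_⟩
      · rintro rfl
        simp only [List.map_nil, List.prod_nil] at hvp
        exact hne hvp.symm
      · rw [List.map_append, List.prod_append, hinv_prod, hvp]
        simp
    · rintro ⟨v, ⟨hvgeo, hvne⟩, hprod⟩
      rw [List.map_append, List.prod_append, hinv_prod, mul_inv_eq_one] at hprod
      intro h1
      have hv1 : (v.map π).prod = 1 := hprod ▸ h1
      have hle := hvgeo [] (by simp [hv1])
      simp only [List.length_nil, Nat.le_zero, List.length_eq_zero_iff] at hle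
      exact hvne hle
  -- computability of the components
  have hgeo2 : ComputablePred fun x : List (Fin m) × List (Fin m) =>
      (∀ v' : List (Fin m), (v'.map π).prod = (x.2.map π).prod → x.2.length ≤ v'.length) :=
    myCompPred_comp hgeo Computable.snd
  have hne2 : ComputablePred fun x : List (Fin m) × List (Fin m) => x.2 ≠ [] := by
    refine ComputablePred.computable_iff.2 ⟨fun x => !decide (x.2 = []), ?_, ?_⟩
    · exact (Primrec.not.comp
        (Primrec.eq.comp Primrec.snd (Primrec.const [])).decide).to_comp
    · funext x; simp
  have happ : Computable fun x : List (Fin m) × List (Fin m) => x.1 ++ invw x.2 := by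
    refine Primrec.to_comp ?_
    exact Primrec.list_append.comp Primrec.fst
      (Primrec.list_reverse.comp
        (Primrec.list_map Primrec.snd ((Primrec.dom_finite σ).comp Primrec.snd).to₂))
  have hQ : REPred fun x : List (Fin m) × List (Fin m) =>
      ((∀ v' : List (Fin m), (v'.map π).prod = (x.2.map π).prod → x.2.length ≤ v'.length) ∧
        x.2 ≠ []) ∧ ((x.1 ++ invw x.2).map π).prod = 1 :=
    myRePred_and (myCompPred_and hgeo2 hne2) (myRePred_comp hre happ)
  have hcompl : REPred fun w : List (Fin m) => ¬ (w.map π).prod = 1 :=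
    (myRePred_exists hQ).of_eq fun w => (compl_iff w).symm
  exact ComputablePred.computable_iff_re_compl_re'.2 ⟨hre, hcompl⟩
end
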